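/- arXiv:2603.18347 — 4 statements merged into one kernel-verified Lean document; each statement's English description precedes it below -/
import Mathlib

section
/- Let T be a spanning tree of a connected graph G whose vertices have positive integer populations, let k ≥ 1 divide the total population, and let I = pop(G)/k be the ideal population. Call an edge e of T a valid cut edge if removing e splits T into two subtrees each of whose total population is a positive integer multiple of I. Then T can be partitioned into k connected components each of population exactly I by removing k−1 edges if and only if T has exactly k−1 valid cut edges. -/
open scoped Classical

/-- Total population of a vertex subset. -/
noncomputable def popSet {V : Type*} [Fintype V] (pop : V → ℕ) (s : Set V) : ℕ :=
  ∑ v ∈ Finset.univ, if v ∈ s then pop v else 0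

/-- `e` is a valid cut edge of the tree `T`: it is an edge of `T`, and after deleting it,
every connected component has population a positive integer multiple of `I`. -/
def ValidCut {V : Type*} [Fintype V] (T : SimpleGraph V) (pop : V → ℕ) (I : ℕ)
    (e : Sym2 V) : Prop :=
  e ∈ T.edgeSet ∧
    ∀ c : (T.deleteEdges {e}).ConnectedComponent,
      ∃ m : ℕ, 1 ≤ m ∧ popSet pop c.supp = m * I

namespace TreeCutAux

open SimpleGraph Finset

variable {V : Type*} [Fintype V]

noncomputable instance fintypeCC (G : SimpleGraph V) : Fintype G.ConnectedComponent :=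
  @Quotient.fintype _ _ G.reachableSetoid (Classical.decRel _)

lemma exists_mk {G : SimpleGraph V} (c : G.ConnectedComponent) :
    ∃ v, G.connectedComponentMk v = c :=
  SimpleGraph.ConnectedComponent.ind (fun v => ⟨v, rfl⟩) c

lemma le_popSet {pop : V → ℕ} {s : Set V} {v : V} (hv : v ∈ s) :
    pop v ≤ popSet pop s := by
  calc pop v = if v ∈ s then pop v else 0 := (if_pos hv).symm
    _ ≤ _ := Finset.single_le_sum (f := fun w => if w ∈ s then pop w else 0)
      (fun i _ => Nat.zero_le _) (Finset.mem_univ v)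

lemma popSet_supp_eq {G : SimpleGraph V} (pop : V → ℕ) (c : G.ConnectedComponent) :
    popSet pop c.supp
      = ∑ v ∈ Finset.univ.filter (fun v => G.connectedComponentMk v = c), pop v := by
  rw [popSet, Finset.sum_filter]
  refine Finset.sum_congr rfl fun v _ => ?_
  simp [SimpleGraph.ConnectedComponent.mem_supp_iff]

/-- The map between connected components induced by a spanning subgraph relation. -/
noncomputable def φmap {G₁ G₂ : SimpleGraph V} (h : G₁ ≤ G₂)
    (c : G₁.ConnectedComponent) : G₂.ConnectedComponent :=
  c.map (SimpleGraph.Hom.ofLE h)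

lemma φmap_mk {G₁ G₂ : SimpleGraph V} (h : G₁ ≤ G₂) (v : V) :
    φmap h (G₁.connectedComponentMk v) = G₂.connectedComponentMk v := by
  simp [φmap]

lemma sum_popSet_supp (G : SimpleGraph V) (pop : V → ℕ) :
    ∑ c : G.ConnectedComponent, popSet pop c.supp = popSet pop Set.univ := by
  classical
  have hdisj : Set.PairwiseDisjoint
      ((Finset.univ : Finset G.ConnectedComponent) : Set G.ConnectedComponent)
      (fun c : G.ConnectedComponent =>
        Finset.univ.filter (fun v => G.connectedComponentMk v = c)) := by
    intro d _ d' _ hne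
    apply Finset.disjoint_left.mpr
    intro v hv hv'
    rw [Finset.mem_filter] at hv hv'
    exact hne (hv.2.symm.trans hv'.2)
  have hbi : (Finset.univ : Finset G.ConnectedComponent).biUnion
      (fun c => Finset.univ.filter (fun v => G.connectedComponentMk v = c))
      = (Finset.univ : Finset V) := by
    ext v
    simp only [Finset.mem_biUnion, Finset.mem_filter, Finset.mem_univ, true_and, iff_true]
    exact ⟨G.connectedComponentMk v, rfl⟩
  have htot : popSet pop Set.univ = ∑ v ∈ Finset.univ, pop v := by
    rw [popSet]
    refine Finset.sum_congr rfl fun v _ => if_pos (Set.mem_univ v)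
  rw [htot]
  simp only [popSet_supp_eq]
  rw [← Finset.sum_biUnion hdisj, hbi]

lemma popSet_supp_fiber {G₁ G₂ : SimpleGraph V} (pop : V → ℕ) (h : G₁ ≤ G₂)
    (c : G₂.ConnectedComponent) :
    popSet pop c.supp =
      ∑ d ∈ Finset.univ.filter (fun d : G₁.ConnectedComponent => φmap h d = c),
        popSet pop d.supp := by
  classical
  have hdisj : Set.PairwiseDisjoint
      ((Finset.univ.filter (fun d : G₁.ConnectedComponent => φmap h d = c)) :
        Set G₁.ConnectedComponent)
      (fun d : G₁.ConnectedComponent =>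
        Finset.univ.filter (fun v => G₁.connectedComponentMk v = d)) := by
    intro d _ d' _ hne
    apply Finset.disjoint_left.mpr
    intro v hv hv'
    rw [Finset.mem_filter] at hv hv'
    exact hne (hv.2.symm.trans hv'.2)
  have hbi : (Finset.univ.filter (fun d : G₁.ConnectedComponent => φmap h d = c)).biUnion
      (fun d => Finset.univ.filter (fun v => G₁.connectedComponentMk v = d))
      = Finset.univ.filter (fun v => G₂.connectedComponentMk v = c) := by
    ext v
    simp only [Finset.mem_biUnion, Finset.mem_filter, Finset.mem_univ, true_and]
    constructor
    · rintro ⟨d, hd, rfl⟩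
      rwa [φmap_mk] at hd
    · intro hv
      exact ⟨G₁.connectedComponentMk v, by rwa [φmap_mk], rfl⟩
  rw [popSet_supp_eq, ← hbi, Finset.sum_biUnion hdisj]
  exact Finset.sum_congr rfl fun d _ => (popSet_supp_eq pop d).symm

lemma reachable_deleteEdges_endpoint {G : SimpleGraph V} (b : V) {u a : V} (w : G.Walk u a) :
    (G.deleteEdges {s(a, b)}).Reachable u a ∨ (G.deleteEdges {s(a, b)}).Reachable u b := by
  induction w with
  | nil => exact Or.inl (Reachable.refl _)
  | @cons u' x y h p ih =>
    by_cases he : s(u', x) = s(y, b)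
    · rw [Sym2.eq_iff] at he
      rcases he with ⟨rfl, rfl⟩ | ⟨rfl, rfl⟩
      · exact Or.inl (Reachable.refl _)
      · exact Or.inr (Reachable.refl _)
    · have hadj : (G.deleteEdges {s(y, b)}).Adj u' x := by
        rw [SimpleGraph.deleteEdges_adj]
        exact ⟨h, by simp [he]⟩
      rcases ih with h1 | h1
      · exact Or.inl (hadj.reachable.trans h1)
      · exact Or.inr (hadj.reachable.trans h1)

lemma reachable_deleteEdges_of_not_reachable {G : SimpleGraph V} {a b u v : V}
    (hr : G.Reachable u v) (hn : ¬ G.Reachable u a) :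
    (G.deleteEdges {s(a, b)}).Reachable u v := by
  obtain ⟨w⟩ := hr
  refine ⟨w.toDeleteEdges _ ?_⟩
  intro e he hes
  rw [Set.mem_singleton_iff] at hes
  subst hes
  exact hn ⟨w.takeUntil a (w.fst_mem_support_of_mem_edges he)⟩

lemma fiber_endpoint {G : SimpleGraph V} {a b : V}
    {c : (G.deleteEdges {s(a, b)}).ConnectedComponent}
    (hc : φmap (G.deleteEdges_le {s(a, b)}) c = G.connectedComponentMk a) :
    c = (G.deleteEdges {s(a, b)}).connectedComponentMk a ∨
      c = (G.deleteEdges {s(a, b)}).connectedComponentMk b := by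
  obtain ⟨u, rfl⟩ := exists_mk c
  rw [φmap_mk] at hc
  obtain ⟨w⟩ := SimpleGraph.ConnectedComponent.exact hc
  rcases reachable_deleteEdges_endpoint b w with h | h
  · exact Or.inl (SimpleGraph.ConnectedComponent.sound h)
  · exact Or.inr (SimpleGraph.ConnectedComponent.sound h)

lemma supp_eq_of_ne {G : SimpleGraph V} {a b : V}
    {c : (G.deleteEdges {s(a, b)}).ConnectedComponent}
    (hc : φmap (G.deleteEdges_le {s(a, b)}) c ≠ G.connectedComponentMk a) :
    c.supp = (φmap (G.deleteEdges_le {s(a, b)}) c).supp := by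
  obtain ⟨u, rfl⟩ := exists_mk c
  rw [φmap_mk] at hc ⊢
  ext v
  simp only [SimpleGraph.ConnectedComponent.mem_supp_iff]
  constructor
  · intro h
    obtain ⟨w⟩ := SimpleGraph.ConnectedComponent.exact h
    exact SimpleGraph.ConnectedComponent.sound
      ⟨w.mapLe (G.deleteEdges_le {s(a, b)})⟩
  · intro h
    have hvu : G.Reachable v u := SimpleGraph.ConnectedComponent.exact h
    have hna : ¬ G.Reachable v a := by
      intro hva
      exact hc (SimpleGraph.ConnectedComponent.sound (hvu.symm.trans hva))
    exact SimpleGraph.ConnectedComponent.sound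
      (reachable_deleteEdges_of_not_reachable hvu hna)

lemma tree_bridge {T : SimpleGraph V} (hTree : T.IsTree) {a b : V} (h : T.Adj a b) :
    ¬ (T.deleteEdges {s(a, b)}).Reachable a b := by
  have hb := (SimpleGraph.isAcyclic_iff_forall_adj_isBridge.mp hTree.2) h
  rw [SimpleGraph.isBridge_iff] at hb
  exact hb

lemma card_cc_deleteEdge {G : SimpleGraph V} {a b : V} (hab : G.Adj a b)
    (hbr : ¬ (G.deleteEdges {s(a, b)}).Reachable a b) :
    Fintype.card (G.deleteEdges {s(a, b)}).ConnectedComponent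
      = Fintype.card G.ConnectedComponent + 1 := by
  classical
  set G' := G.deleteEdges {s(a, b)} with hG'
  have hAB : G'.connectedComponentMk a ≠ G'.connectedComponentMk b :=
    fun h => hbr (SimpleGraph.ConnectedComponent.exact h)
  have hcount : (Finset.univ : Finset G'.ConnectedComponent).card
      = ∑ c : G.ConnectedComponent,
          (Finset.univ.filter (fun d : G'.ConnectedComponent =>
            φmap (G.deleteEdges_le {s(a, b)}) d = c)).card :=
    Finset.card_eq_sum_card_fiberwise (fun x _ => Finset.mem_univ _)
  have h1 : ∀ c : G.ConnectedComponent, c ≠ G.connectedComponentMk a →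
      (Finset.univ.filter (fun d : G'.ConnectedComponent =>
        φmap (G.deleteEdges_le {s(a, b)}) d = c)).card = 1 := by
    intro c hc
    rw [Finset.card_eq_one]
    obtain ⟨v, rfl⟩ := exists_mk c
    refine ⟨G'.connectedComponentMk v, ?_⟩
    ext d
    simp only [Finset.mem_filter, Finset.mem_univ, true_and, Finset.mem_singleton]
    constructor
    · intro hd
      have h1 : d.supp = (G.connectedComponentMk v).supp := by
        have := supp_eq_of_ne (c := d) (by rw [hd]; exact hc)
        rwa [hd] at this
      have h2 : (G'.connectedComponentMk v).supp = (G.connectedComponentMk v).supp := by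
        have := supp_eq_of_ne (c := G'.connectedComponentMk v)
          (by rw [φmap_mk]; exact hc)
        rwa [φmap_mk] at this
      exact SimpleGraph.ConnectedComponent.supp_injective (h1.trans h2.symm)
    · rintro rfl
      exact φmap_mk _ v
  have h2 : (Finset.univ.filter
      (fun d : G'.ConnectedComponent =>
        φmap (G.deleteEdges_le {s(a, b)}) d = G.connectedComponentMk a)).card = 2 := by
    have hset : Finset.univ.filter
        (fun d : G'.ConnectedComponent =>
          φmap (G.deleteEdges_le {s(a, b)}) d = G.connectedComponentMk a)
        = {G'.connectedComponentMk a, G'.connectedComponentMk b} := by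
      ext d
      simp only [Finset.mem_filter, Finset.mem_univ, true_and, Finset.mem_insert,
        Finset.mem_singleton]
      constructor
      · exact fun hd => fiber_endpoint hd
      · rintro (rfl | rfl)
        · exact φmap_mk _ a
        · rw [φmap_mk]
          exact SimpleGraph.ConnectedComponent.sound hab.symm.reachable
    rw [hset, Finset.card_insert_of_notMem (by simpa using hAB), Finset.card_singleton]
  have hmem : G.connectedComponentMk a ∈ (Finset.univ : Finset G.ConnectedComponent) :=
    Finset.mem_univ _
  rw [Fintype.card, Fintype.card, hcount,
    ← Finset.sum_erase_add _ _ hmem, h2,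
    Finset.sum_congr rfl (fun c hc => h1 c (Finset.mem_erase.mp hc).1),
    Finset.sum_const, smul_eq_mul, mul_one,
    Finset.card_erase_of_mem hmem]
  have : 0 < (Finset.univ : Finset G.ConnectedComponent).card :=
    Finset.card_pos.mpr ⟨G.connectedComponentMk a, Finset.mem_univ _⟩
  omega

lemma key_dvd {T G : SimpleGraph V} (pop : V → ℕ) (I : ℕ) (hGT : G ≤ T) {a b : V}
    (hbrT : ¬ (T.deleteEdges {s(a, b)}).Reachable a b)
    (hX : I ∣ popSet pop ((T.deleteEdges {s(a, b)}).connectedComponentMk a).supp)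
    (hother : ∀ d : (G.deleteEdges {s(a, b)}).ConnectedComponent,
        φmap (G.deleteEdges_le {s(a, b)}) d ≠ G.connectedComponentMk a →
        I ∣ popSet pop d.supp) :
    I ∣ popSet pop ((G.deleteEdges {s(a, b)}).connectedComponentMk a).supp := by
  classical
  have hle : G.deleteEdges {s(a, b)} ≤ T.deleteEdges {s(a, b)} :=
    SimpleGraph.deleteEdges_mono hGT
  set A := (G.deleteEdges {s(a, b)}).connectedComponentMk a with hA
  set s := Finset.univ.filter
    (fun d : (G.deleteEdges {s(a, b)}).ConnectedComponent =>
      φmap hle d = (T.deleteEdges {s(a, b)}).connectedComponentMk a) with hs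
  have hXsum := popSet_supp_fiber pop hle ((T.deleteEdges {s(a, b)}).connectedComponentMk a)
  have hA_mem : A ∈ s := by
    simp only [hs, Finset.mem_filter, Finset.mem_univ, true_and, hA, φmap_mk]
  have hrest : ∀ d ∈ s.erase A, I ∣ popSet pop d.supp := by
    intro d hd
    obtain ⟨hdA, hds⟩ := Finset.mem_erase.mp hd
    refine hother d ?_
    intro hφ
    rcases fiber_endpoint hφ with rfl | rfl
    · exact hdA rfl
    · rw [hs, Finset.mem_filter, φmap_mk] at hds
      exact hbrT (SimpleGraph.ConnectedComponent.exact hds.2).symm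
  have hsplit : popSet pop ((T.deleteEdges {s(a, b)}).connectedComponentMk a).supp
      = popSet pop A.supp + ∑ d ∈ s.erase A, popSet pop d.supp := by
    rw [hXsum, ← Finset.add_sum_erase _ _ hA_mem]
  have hdvd_rest : I ∣ ∑ d ∈ s.erase A, popSet pop d.supp := Finset.dvd_sum hrest
  rw [hsplit] at hX
  have heq : popSet pop A.supp
      = (popSet pop A.supp + ∑ d ∈ s.erase A, popSet pop d.supp)
        - ∑ d ∈ s.erase A, popSet pop d.supp := by omega
  rw [heq]
  exact Nat.dvd_sub hX hdvd_rest

lemma deleteEdges_insert (T : SimpleGraph V) (e : Sym2 V) (F' : Finset (Sym2 V)) :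
    T.deleteEdges ↑(insert e F') = (T.deleteEdges ↑F').deleteEdges {e} := by
  rw [SimpleGraph.deleteEdges_deleteEdges]
  congr 1
  ext x
  simp only [Finset.coe_insert, Set.mem_insert_iff, Set.mem_union, Finset.mem_coe,
    Set.mem_singleton_iff]
  tauto

lemma card_components {T : SimpleGraph V} (hTree : T.IsTree) :
    ∀ F : Finset (Sym2 V), ↑F ⊆ T.edgeSet →
      Fintype.card (T.deleteEdges ↑F).ConnectedComponent = F.card + 1 := by
  intro F
  induction F using Finset.induction_on with
  | empty =>
    intro _
    rw [show ((∅ : Finset (Sym2 V)) : Set (Sym2 V)) = ∅ by simp,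
      SimpleGraph.deleteEdges_empty, Finset.card_empty]
    have hc := hTree.1
    rw [Fintype.card_eq_one_iff]
    obtain ⟨v⟩ := hc.nonempty
    refine ⟨T.connectedComponentMk v, fun c => ?_⟩
    obtain ⟨u, rfl⟩ := exists_mk c
    exact SimpleGraph.ConnectedComponent.sound (hc.preconnected u v)
  | @insert e F' he ih =>
    intro hsub
    have hF'sub : ↑F' ⊆ T.edgeSet := by
      refine subset_trans ?_ hsub
      simp only [Finset.coe_subset]
      exact Finset.subset_insert e F'
    have heT : e ∈ T.edgeSet := hsub (by simp)
    induction e using Sym2.ind with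
    | _ a b =>
      have hab : (T.deleteEdges ↑F').Adj a b := by
        rw [SimpleGraph.deleteEdges_adj]
        exact ⟨((SimpleGraph.mem_edgeSet _).mp heT), by simpa using he⟩
      have hbrT : ¬ (T.deleteEdges {s(a, b)}).Reachable a b :=
        tree_bridge hTree (((SimpleGraph.mem_edgeSet _).mp heT))
      have hbr : ¬ ((T.deleteEdges ↑F').deleteEdges {s(a, b)}).Reachable a b := by
        intro h
        exact hbrT (h.mono (SimpleGraph.deleteEdges_mono (T.deleteEdges_le ↑F')))
      rw [deleteEdges_insert, card_cc_deleteEdge hab hbr, ih hF'sub,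
        Finset.card_insert_of_notMem he]

lemma step_dvd {T G : SimpleGraph V} (pop : V → ℕ) (I : ℕ) (hGT : G ≤ T) {a b : V}
    (hbrT : ¬ (T.deleteEdges {s(a, b)}).Reachable a b)
    (hval : ∀ c : (T.deleteEdges {s(a, b)}).ConnectedComponent,
      ∃ m : ℕ, 1 ≤ m ∧ popSet pop c.supp = m * I)
    (hG : ∀ c : G.ConnectedComponent, I ∣ popSet pop c.supp) :
    ∀ c : (G.deleteEdges {s(a, b)}).ConnectedComponent, I ∣ popSet pop c.supp := by
  have hother : ∀ d : (G.deleteEdges {s(a, b)}).ConnectedComponent,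
      φmap (G.deleteEdges_le {s(a, b)}) d ≠ G.connectedComponentMk a →
      I ∣ popSet pop d.supp := by
    intro d hd
    rw [supp_eq_of_ne hd]
    exact hG _
  have hX : I ∣ popSet pop ((T.deleteEdges {s(a, b)}).connectedComponentMk a).supp := by
    obtain ⟨m, _, hm⟩ := hval _
    exact ⟨m, by rw [hm, Nat.mul_comm]⟩
  intro c
  by_cases hc : φmap (G.deleteEdges_le {s(a, b)}) c = G.connectedComponentMk a
  · rcases fiber_endpoint hc with rfl | rfl
    · exact key_dvd pop I hGT hbrT hX hother
    · rw [show s(a, b) = s(b, a) from Sym2.eq_swap] at hbrT hval hother ⊢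
      have hbrT' : ¬ (T.deleteEdges {s(b, a)}).Reachable b a := fun h => hbrT h.symm
      have hX' : I ∣ popSet pop ((T.deleteEdges {s(b, a)}).connectedComponentMk b).supp := by
        obtain ⟨m, _, hm⟩ := hval _
        exact ⟨m, by rw [hm, Nat.mul_comm]⟩
      have hother' : ∀ d : (G.deleteEdges {s(b, a)}).ConnectedComponent,
          φmap (G.deleteEdges_le {s(b, a)}) d ≠ G.connectedComponentMk b →
          I ∣ popSet pop d.supp := by
        intro d hd
        rw [supp_eq_of_ne hd]
        exact hG _
      exact key_dvd pop I hGT hbrT' hX' hother'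
  · exact hother c hc

lemma dvd_components {T : SimpleGraph V} (pop : V → ℕ) (I : ℕ) (hTree : T.IsTree)
    (htot : I ∣ popSet pop Set.univ) :
    ∀ F : Finset (Sym2 V), ↑F ⊆ T.edgeSet → (∀ e ∈ F, ValidCut T pop I e) →
      ∀ c : (T.deleteEdges ↑F).ConnectedComponent, I ∣ popSet pop c.supp := by
  intro F
  induction F using Finset.induction_on with
  | empty =>
    intro _ _
    rw [show ((∅ : Finset (Sym2 V)) : Set (Sym2 V)) = ∅ by simp,
      SimpleGraph.deleteEdges_empty]
    intro c
    have hc := hTree.1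
    have hsupp : c.supp = Set.univ := by
      obtain ⟨u, rfl⟩ := exists_mk c
      ext v
      simp only [SimpleGraph.ConnectedComponent.mem_supp_iff, Set.mem_univ, iff_true]
      exact SimpleGraph.ConnectedComponent.sound (hc.preconnected v u)
    rw [hsupp]
    exact htot
  | @insert e F' he ih =>
    intro hsub hval
    have hF'sub : ↑F' ⊆ T.edgeSet := by
      refine subset_trans ?_ hsub
      simp only [Finset.coe_subset]
      exact Finset.subset_insert e F'
    have heT : e ∈ T.edgeSet := hsub (by simp)
    have hvalF' : ∀ e' ∈ F', ValidCut T pop I e' :=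
      fun e' he' => hval e' (Finset.mem_insert_of_mem he')
    have hvale : ValidCut T pop I e := hval e (Finset.mem_insert_self e F')
    induction e using Sym2.ind with
    | _ a b =>
      have hbrT : ¬ (T.deleteEdges {s(a, b)}).Reachable a b :=
        tree_bridge hTree (((SimpleGraph.mem_edgeSet _).mp heT))
      rw [deleteEdges_insert]
      exact step_dvd pop I (T.deleteEdges_le ↑F') hbrT hvale.2 (ih hF'sub hvalF')

end TreeCutAux

open TreeCutAux SimpleGraph Finset in
/-- A spanning tree `T` of a connected graph `G` can be partitioned into `k` connected
components each of population exactly `I` by removing `k-1` edges iff `T` has exactly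
`k-1` valid cut edges. -/
theorem completelyCuttable_iff_count_validCut {V : Type*} [Fintype V]
    (G T : SimpleGraph V) (pop : V → ℕ)
    (hpos : ∀ v, 0 < pop v) (hG : G.Connected) (hT : T ≤ G) (hTree : T.IsTree)
    (k I : ℕ) (hk : 1 ≤ k) (hI : popSet pop Set.univ = k * I) :
    (∃ F : Finset (Sym2 V), ↑F ⊆ T.edgeSet ∧ F.card = k - 1 ∧
        ∀ c : (T.deleteEdges ↑F).ConnectedComponent, popSet pop c.supp = I) ↔
      ((Finset.univ : Finset (Sym2 V)).filter (fun e => ValidCut T pop I e)).card = k - 1 := by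
  have hVne : Nonempty V := hTree.1.nonempty
  have hIpos : 0 < I := by
    obtain ⟨v⟩ := hVne
    have h1 : 0 < popSet pop Set.univ :=
      lt_of_lt_of_le (hpos v) (le_popSet (Set.mem_univ v))
    rw [hI] at h1
    exact Nat.pos_of_mul_pos_left (by rwa [Nat.mul_comm] at h1)
  constructor
  · rintro ⟨F, hFsub, hFcard, hcomp⟩
    have hfilter : (Finset.univ : Finset (Sym2 V)).filter (fun e => ValidCut T pop I e) = F := by
      ext e
      simp only [Finset.mem_filter, Finset.mem_univ, true_and]
      constructor
      · intro hvc
        by_contra heF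
        induction e using Sym2.ind with
        | _ a b =>
          have hTab : T.Adj a b := ((SimpleGraph.mem_edgeSet _).mp hvc.1)
          have hab : (T.deleteEdges ↑F).Adj a b := by
            rw [SimpleGraph.deleteEdges_adj]
            exact ⟨hTab, by simpa using heF⟩
          have hbrT : ¬ (T.deleteEdges {s(a, b)}).Reachable a b := tree_bridge hTree hTab
          have hbr : ¬ ((T.deleteEdges ↑F).deleteEdges {s(a, b)}).Reachable a b := by
            intro h
            exact hbrT (h.mono (SimpleGraph.deleteEdges_mono (T.deleteEdges_le ↑F)))
          set G' := (T.deleteEdges ↑F).deleteEdges {s(a, b)} with hG'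
          set A := G'.connectedComponentMk a with hA
          set B := G'.connectedComponentMk b with hB
          have hAB : A ≠ B := fun h => hbr (SimpleGraph.ConnectedComponent.exact h)
          -- pop A + pop B = I
          have hfib := popSet_supp_fiber pop
            ((T.deleteEdges ↑F).deleteEdges_le {s(a, b)})
            ((T.deleteEdges ↑F).connectedComponentMk a)
          have hset : Finset.univ.filter
              (fun d : G'.ConnectedComponent =>
                φmap ((T.deleteEdges ↑F).deleteEdges_le {s(a, b)}) d
                  = (T.deleteEdges ↑F).connectedComponentMk a) = {A, B} := by
            ext d
            simp only [Finset.mem_filter, Finset.mem_univ, true_and, Finset.mem_insert,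
              Finset.mem_singleton]
            constructor
            · exact fun hd => fiber_endpoint hd
            · rintro (rfl | rfl)
              · exact φmap_mk _ a
              · rw [φmap_mk]
                exact SimpleGraph.ConnectedComponent.sound hab.symm.reachable
          rw [hset, Finset.sum_pair hAB, hcomp] at hfib
          have hApos : 0 < popSet pop A.supp :=
            lt_of_lt_of_le (hpos a) (le_popSet (by rw [SimpleGraph.ConnectedComponent.mem_supp_iff]))
          have hBpos : 0 < popSet pop B.supp :=
            lt_of_lt_of_le (hpos b) (le_popSet (by rw [SimpleGraph.ConnectedComponent.mem_supp_iff]))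
          -- divisibility of pop A
          have hother : ∀ d : G'.ConnectedComponent,
              φmap ((T.deleteEdges ↑F).deleteEdges_le {s(a, b)}) d
                ≠ (T.deleteEdges ↑F).connectedComponentMk a →
              I ∣ popSet pop d.supp := by
            intro d hd
            rw [supp_eq_of_ne hd, hcomp]
          have hX : I ∣ popSet pop
              ((T.deleteEdges {s(a, b)}).connectedComponentMk a).supp := by
            obtain ⟨m, _, hm⟩ := hvc.2 ((T.deleteEdges {s(a, b)}).connectedComponentMk a)
            exact ⟨m, by rw [hm, Nat.mul_comm]⟩
          have hdvdA : I ∣ popSet pop A.supp :=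
            key_dvd pop I (T.deleteEdges_le ↑F) hbrT hX hother
          have := Nat.le_of_dvd hApos hdvdA
          omega
      · intro heF
        refine ⟨hFsub heF, fun c => ?_⟩
        have hle : T.deleteEdges ↑F ≤ T.deleteEdges {e} :=
          SimpleGraph.deleteEdges_anti (by simpa using heF)
        rw [popSet_supp_fiber pop hle c]
        refine ⟨(Finset.univ.filter
          (fun d : (T.deleteEdges ↑F).ConnectedComponent => φmap hle d = c)).card, ?_, ?_⟩
        · rw [Nat.succ_le_iff, Finset.card_pos]
          obtain ⟨v, rfl⟩ := exists_mk c
          exact ⟨(T.deleteEdges ↑F).connectedComponentMk v, by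
            simp [Finset.mem_filter, φmap_mk]⟩
        · rw [Finset.sum_congr rfl (fun d _ => hcomp d), Finset.sum_const, smul_eq_mul]
    rw [hfilter, hFcard]
  · intro hcount
    set F := (Finset.univ : Finset (Sym2 V)).filter (fun e => ValidCut T pop I e) with hF
    have hFsub : ↑F ⊆ T.edgeSet := by
      intro e he
      rw [Finset.mem_coe, hF, Finset.mem_filter] at he
      exact he.2.1
    refine ⟨F, hFsub, hcount, ?_⟩
    have hdvd := dvd_components pop I hTree ⟨k, by rw [hI, Nat.mul_comm]⟩ F hFsub
      (fun e he => (Finset.mem_filter.mp he).2)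
    have hcard := card_components hTree F hFsub
    rw [hcount] at hcard
    have hcardk : Fintype.card (T.deleteEdges ↑F).ConnectedComponent = k := by omega
    have hsum : ∑ c : (T.deleteEdges ↑F).ConnectedComponent, popSet pop c.supp = k * I := by
      rw [sum_popSet_supp, hI]
    have hge : ∀ c : (T.deleteEdges ↑F).ConnectedComponent, I ≤ popSet pop c.supp := by
      intro c
      refine Nat.le_of_dvd ?_ (hdvd c)
      obtain ⟨v, rfl⟩ := exists_mk c
      exact lt_of_lt_of_le (hpos v)
        (le_popSet (by rw [SimpleGraph.ConnectedComponent.mem_supp_iff]))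
    intro c
    by_contra hne
    have hlt : I < popSet pop c.supp := lt_of_le_of_ne (hge c) (Ne.symm hne)
    have hstrict : ∑ _c' : (T.deleteEdges ↑F).ConnectedComponent, I
        < ∑ c' : (T.deleteEdges ↑F).ConnectedComponent, popSet pop c'.supp :=
      Finset.sum_lt_sum (fun i _ => hge i) ⟨c, Finset.mem_univ c, hlt⟩
    rw [Finset.sum_const, hsum, smul_eq_mul] at hstrict
    have huc : (Finset.univ : Finset (T.deleteEdges ↑F).ConnectedComponent).card = k := hcardk
    rw [huc] at hstrict
    exact lt_irrefl _ hstrict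
end

section
/- Let G be a connected graph and P = {D_1, …, D_k} a partition of V(G) into sets each inducing a connected subgraph. Then the completely cuttable spanning trees of G inducing the partition P (i.e., spanning trees T such that deleting the edges of T that cross between different parts leaves exactly the induced spanning forests on the D_i, with exactly k−1 crossing edges) are in bijection with tuples consisting of a spanning tree of each induced subgraph G[D_i] together with a spanning tree of the quotient multigraph G/P. Consequently, the number of spanning trees of G whose crossing-edge set has size exactly k−1 and which induce P equals ST(G/P) · ∏_{i=1}^k ST(G[D_i]). -/
open scoped Classical
set_option linter.unusedSectionVars false
set_option maxHeartbeats 1000000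

/-- The simple graph underlying the set `S` of edges of a multigraph with
endpoint map `ends`. -/
def mgFrom {V E : Type*} (ends : E → Sym2 V) (S : Set E) : SimpleGraph V :=
  SimpleGraph.fromEdgeSet (ends '' S)

/-- `S` is (the edge set of) a spanning tree of the sub-multigraph induced on the
vertex set `D`: all its edges lie inside `D`, the corresponding graph is connected
on `D`, and it has exactly `|D| - 1` edges. -/
def IsSpanningTreeOn {V E : Type*} [Fintype V] [Fintype E] (ends : E → Sym2 V)
    (S : Finset E) (D : Set V) : Prop :=
  (∀ e ∈ S, ∀ v ∈ ends e, v ∈ D) ∧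
    ((mgFrom ends ↑S).induce D).Connected ∧ S.card + 1 = D.ncard

/-- The number of spanning trees of the sub-multigraph induced on `D`. -/
noncomputable def stCountOn {V E : Type*} [Fintype V] [Fintype E] (ends : E → Sym2 V)
    (D : Set V) : ℕ :=
  ((Finset.univ : Finset (Finset E)).filter (fun S => IsSpanningTreeOn ends S D)).card

section Aux

variable {V E : Type*} [Fintype V] [Fintype E] {k : ℕ}

lemma sym2_rep (z : Sym2 V) : ∃ a b, z = s(a, b) := by
  induction z using Sym2.ind with
  | _ a b => exact ⟨a, b, rfl⟩

lemma mgFrom_adj (ends : E → Sym2 V) (S : Set E) {u v : V} :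
    (mgFrom ends S).Adj u v ↔ s(u, v) ∈ ends '' S ∧ u ≠ v := by
  simp [mgFrom, SimpleGraph.fromEdgeSet_adj]

lemma mgFrom_mono (ends : E → Sym2 V) {S S' : Set E} (h : S ⊆ S') :
    mgFrom ends S ≤ mgFrom ends S' :=
  SimpleGraph.fromEdgeSet_mono (Set.image_mono h)

lemma reach_of_induce {G : SimpleGraph V} {D : Set V} (h : (G.induce D).Connected)
    {v w : V} (hv : v ∈ D) (hw : w ∈ D) : G.Reachable v w :=
  (h.preconnected ⟨v, hv⟩ ⟨w, hw⟩).map ⟨Subtype.val, fun h => h⟩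

lemma connected_induce_univ {G : SimpleGraph V} [Nonempty V]
    (h : ∀ v w, G.Reachable v w) : (G.induce Set.univ).Connected :=
  (SimpleGraph.Iso.connected_iff (SimpleGraph.induceUnivIso G)).mpr ⟨h⟩

lemma sum_ncard_fibers (p : V → Fin k) :
    ∑ i : Fin k, ({v | p v = i} : Set V).ncard = Fintype.card V := by
  have h : ∀ i : Fin k, ({v | p v = i} : Set V).ncard
      = (Finset.univ.filter fun v => p v = i).card := by
    intro i
    rw [← Set.ncard_coe_finset]
    congr 1
    ext v; simp
  simp_rw [h]
  rw [← Finset.card_univ (α := V),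
    Finset.card_eq_sum_card_fiberwise (fun v _ => Finset.mem_univ (p v))]

variable (ends : E → Sym2 V) (p : V → Fin k)

/-- the crossing-edge subtype -/
abbrev CrossE := {e : E // ¬ (Sym2.map p (ends e)).IsDiag}

/-- quotient endpoint map -/
def qends : CrossE ends p → Sym2 (Fin k) := fun e => Sym2.map p (ends e.1)

/-- crossing edges of `S`, as a finset of the subtype -/
noncomputable def Qof (S : Finset E) : Finset (CrossE ends p) :=
  Finset.univ.filter fun e => e.1 ∈ S

noncomputable def unionOf (Q : Finset (CrossE ends p)) (T : Fin k → Finset E) : Finset E :=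
  Q.image Subtype.val ∪ Finset.univ.biUnion fun i => T i

lemma within_diag {e : E} {i : Fin k} (h : ∀ v ∈ ends e, p v = i) :
    (Sym2.map p (ends e)).IsDiag := by
  obtain ⟨a, b, hab⟩ := sym2_rep (ends e)
  have ha : p a = i := h a (by rw [hab]; exact Sym2.mem_mk_left a b)
  have hb : p b = i := h b (by rw [hab]; exact Sym2.mem_mk_right a b)
  rw [hab, Sym2.map_pair_eq, Sym2.mk_isDiag_iff, ha, hb]

lemma Qof_card (S : Finset E) :
    (Qof ends p S).card = (S.filter fun e => ¬ (Sym2.map p (ends e)).IsDiag).card := by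
  refine Finset.card_bij (fun e _ => e.1) ?_ ?_ ?_
  · intro e he
    rw [Finset.mem_filter]
    exact ⟨(Finset.mem_filter.mp he).2, e.2⟩
  · intro a ha b hb hab
    exact Subtype.ext hab
  · intro e he
    rw [Finset.mem_filter] at he
    exact ⟨⟨e, he.2⟩, by simp [Qof, he.1], rfl⟩

lemma forward_quot (hne : ∀ i : Fin k, ∃ v, p v = i) (hk : 1 ≤ k) (S : Finset E)
    (hS : IsSpanningTreeOn ends S Set.univ)
    (hcut : (S.filter fun e => ¬ (Sym2.map p (ends e)).IsDiag).card = k - 1) :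
    IsSpanningTreeOn (qends ends p) (Qof ends p S) (Set.univ : Set (Fin k)) := by
  haveI : Nonempty (Fin k) := ⟨⟨0, hk⟩⟩
  have key : ∀ v w : V, (mgFrom ends ↑S).Reachable v w →
      (mgFrom (qends ends p) ↑(Qof ends p S)).Reachable (p v) (p w) := by
    intro v w hr
    obtain ⟨wk⟩ := hr
    induction wk with
    | nil => exact SimpleGraph.Reachable.refl _
    | @cons a b c h q ih =>
      refine SimpleGraph.Reachable.trans ?_ ih
      rw [mgFrom_adj] at h
      obtain ⟨⟨e, heS, hee⟩, hab⟩ := h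
      by_cases hpd : p a = p b
      · rw [hpd]
      · apply SimpleGraph.Adj.reachable
        rw [mgFrom_adj]
        refine ⟨?_, hpd⟩
        have hcr : ¬ (Sym2.map p (ends e)).IsDiag := by
          rw [hee, Sym2.map_pair_eq, Sym2.mk_isDiag_iff]; exact hpd
        refine ⟨⟨e, hcr⟩, by simpa [Qof] using heS, ?_⟩
        show Sym2.map p (ends e) = s(p a, p b)
        rw [hee, Sym2.map_pair_eq]
  refine ⟨fun _ _ _ _ => Set.mem_univ _, ?_, ?_⟩
  · apply connected_induce_univ
    intro i j
    obtain ⟨v, hv⟩ := hne i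
    obtain ⟨w, hw⟩ := hne j
    have := key v w (reach_of_induce hS.2.1 (Set.mem_univ v) (Set.mem_univ w))
    rwa [hv, hw] at this
  · rw [Qof_card, hcut, Set.ncard_univ, Nat.card_eq_fintype_card, Fintype.card_fin]
    omega

lemma unionOf_card (Q : Finset (CrossE ends p)) (T : Fin k → Finset E)
    (hT1 : ∀ i, ∀ e ∈ T i, ∀ v ∈ ends e, p v ∈ ({i} : Set (Fin k))) :
    (unionOf ends p Q T).card = Q.card + ∑ i, (T i).card := by
  have hT1' : ∀ i, ∀ e ∈ T i, ∀ v ∈ ends e, p v = i := by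
    intro i e he v hv
    simpa using hT1 i e he v hv
  have hdisj2 : ∀ (i : Fin k), i ∈ Finset.univ → ∀ (j : Fin k), j ∈ Finset.univ → i ≠ j →
      Disjoint (T i) (T j) := by
    intro i _ j _ hij
    rw [Finset.disjoint_left]
    intro e hei hej
    obtain ⟨a, b, hab⟩ := sym2_rep (ends e)
    have ha : a ∈ ends e := by rw [hab]; exact Sym2.mem_mk_left a b
    exact hij ((hT1' i e hei a ha).symm.trans (hT1' j e hej a ha))
  have hdisj1 : Disjoint (Q.image Subtype.val) (Finset.univ.biUnion fun i => T i) := by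
    rw [Finset.disjoint_left]
    intro e he he'
    rw [Finset.mem_image] at he
    obtain ⟨⟨e', hcr⟩, _, rfl⟩ := he
    rw [Finset.mem_biUnion] at he'
    obtain ⟨i, _, hei⟩ := he'
    exact hcr (within_diag ends p (hT1' i _ hei))
  rw [unionOf, Finset.card_union_of_disjoint hdisj1, Finset.card_biUnion hdisj2,
    Finset.card_image_of_injective _ Subtype.val_injective]

lemma cross_filter_eq (Q : Finset (CrossE ends p)) (T : Fin k → Finset E)
    (hT1 : ∀ i, ∀ e ∈ T i, ∀ v ∈ ends e, p v = i) :
    (unionOf ends p Q T).filter (fun e => ¬ (Sym2.map p (ends e)).IsDiag)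
      = Q.image Subtype.val := by
  ext e
  rw [Finset.mem_filter, unionOf, Finset.mem_union]
  constructor
  · rintro ⟨he | he, hcr⟩
    · exact he
    · rw [Finset.mem_biUnion] at he
      obtain ⟨i, _, hei⟩ := he
      exact absurd (within_diag ends p (hT1 i e hei)) hcr
  · intro he
    refine ⟨Or.inl he, ?_⟩
    rw [Finset.mem_image] at he
    obtain ⟨⟨e', hcr⟩, _, rfl⟩ := he
    exact hcr

lemma within_filter_eq (Q : Finset (CrossE ends p)) (T : Fin k → Finset E)
    (hT1 : ∀ i, ∀ e ∈ T i, ∀ v ∈ ends e, p v = i) (i : Fin k) :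
    (unionOf ends p Q T).filter (fun e => ∀ v ∈ ends e, p v = i) = T i := by
  ext e
  rw [Finset.mem_filter, unionOf, Finset.mem_union, Finset.mem_biUnion]
  constructor
  · rintro ⟨he | ⟨j, _, hej⟩, hw⟩
    · rw [Finset.mem_image] at he
      obtain ⟨⟨e', hcr⟩, _, rfl⟩ := he
      exact absurd (within_diag ends p hw) hcr
    · obtain ⟨a, b, hab⟩ := sym2_rep (ends e)
      have ha : a ∈ ends e := by rw [hab]; exact Sym2.mem_mk_left a b
      have : j = i := (hT1 j e hej a ha).symm.trans (hw a ha)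
      rwa [this] at hej
  · intro he
    exact ⟨Or.inr ⟨i, Finset.mem_univ i, he⟩, hT1 i e he⟩

lemma backward_reach (hloop : ∀ e, ¬ (ends e).IsDiag)
    (Q : Finset (CrossE ends p)) (T : Fin k → Finset E)
    (hT1 : ∀ i, ∀ e ∈ T i, ∀ v ∈ ends e, p v = i)
    (hTconn : ∀ i, ((mgFrom ends ↑(T i)).induce {v | p v = i}).Connected)
    (hQconn : ((mgFrom (qends ends p) ↑Q).induce Set.univ).Connected) :
    ∀ v w : V, (mgFrom ends ↑(unionOf ends p Q T)).Reachable v w := by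
  have hsubT : ∀ i, (↑(T i) : Set E) ⊆ ↑(unionOf ends p Q T) := by
    intro i e he
    simp only [Finset.coe_subset, Finset.mem_coe] at *
    rw [unionOf, Finset.mem_union, Finset.mem_biUnion]
    exact Or.inr ⟨i, Finset.mem_univ i, he⟩
  have same : ∀ (i : Fin k) (a b : V), p a = i → p b = i →
      (mgFrom ends ↑(unionOf ends p Q T)).Reachable a b := by
    intro i a b ha hb
    exact (reach_of_induce (hTconn i) ha hb).mono (mgFrom_mono ends (hsubT i))
  have key : ∀ (i j : Fin k) (wk : (mgFrom (qends ends p) ↑Q).Walk i j) (a b : V),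
      p a = i → p b = j → (mgFrom ends ↑(unionOf ends p Q T)).Reachable a b := by
    intro i j wk
    induction wk with
    | nil => intro a b ha hb; exact same _ a b ha (hb.trans rfl)
    | @cons i m j h q ih =>
      intro a b ha hb
      rw [mgFrom_adj] at h
      obtain ⟨⟨⟨e, hcr⟩, heQ, hee⟩, hij⟩ := h
      obtain ⟨x, y, hxy⟩ := sym2_rep (ends e)
      have hmemS : e ∈ (↑(unionOf ends p Q T) : Set E) := by
        rw [Finset.mem_coe, unionOf, Finset.mem_union, Finset.mem_image]
        exact Or.inl ⟨⟨e, hcr⟩, heQ, rfl⟩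
      have hxny : x ≠ y := by
        intro hxyeq
        apply hloop e
        rw [hxy, hxyeq]
        exact Sym2.mk_isDiag_iff.mpr rfl
      have hadj : (mgFrom ends ↑(unionOf ends p Q T)).Adj x y := by
        rw [mgFrom_adj]
        exact ⟨⟨e, hmemS, hxy.symm ▸ rfl⟩, hxny⟩
      have hpq : s(p x, p y) = s(i, m) := by
        have : Sym2.map p (ends e) = s(i, m) := hee
        rwa [hxy, Sym2.map_pair_eq] at this
      rcases Sym2.eq_iff.mp hpq with ⟨h1, h2⟩ | ⟨h1, h2⟩
      · exact (same i a x ha h1).trans (hadj.reachable.trans (ih y b h2 hb))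
      · exact (same i a y ha h2).trans
          (hadj.symm.reachable.trans (ih x b h1 hb))
  intro v w
  have hr : (mgFrom (qends ends p) ↑Q).Reachable (p v) (p w) :=
    reach_of_induce hQconn (Set.mem_univ _) (Set.mem_univ _)
  exact hr.elim fun wk => key (p v) (p w) wk v w rfl rfl


lemma backward_pred (hloop : ∀ e, ¬ (ends e).IsDiag) (hne : ∀ i : Fin k, ∃ v, p v = i)
    (hk : 1 ≤ k)
    (Q : Finset (CrossE ends p)) (hQ : IsSpanningTreeOn (qends ends p) Q Set.univ)
    (T : Fin k → Finset E) (hT : ∀ i, IsSpanningTreeOn ends (T i) {v | p v = i}) :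
    IsSpanningTreeOn ends (unionOf ends p Q T) Set.univ ∧
      ((unionOf ends p Q T).filter (fun e => ¬ (Sym2.map p (ends e)).IsDiag)).card = k - 1 ∧
      ∀ i : Fin k, IsSpanningTreeOn ends
        ((unionOf ends p Q T).filter (fun e => ∀ v ∈ ends e, p v = i)) {v | p v = i} := by
  haveI : Nonempty V := (hne ⟨0, hk⟩).elim fun v _ => ⟨v⟩
  have hT1 : ∀ i, ∀ e ∈ T i, ∀ v ∈ ends e, p v = i := fun i => (hT i).1
  have hQcard : Q.card + 1 = k := by
    have := hQ.2.2
    rwa [Set.ncard_univ, Nat.card_eq_fintype_card, Fintype.card_fin] at this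
  refine ⟨⟨fun _ _ _ _ => Set.mem_univ _, ?_, ?_⟩, ?_, ?_⟩
  · exact connected_induce_univ
      (backward_reach ends p hloop Q T hT1 (fun i => (hT i).2.1) hQ.2.1)
  · rw [unionOf_card ends p Q T (fun i e he v hv => by simpa using hT1 i e he v hv)]
    have hsum : ∑ i, ((T i).card + 1) = Fintype.card V := by
      rw [← sum_ncard_fibers p]
      exact Finset.sum_congr rfl fun i _ => (hT i).2.2
    have hsum' : (∑ i, (T i).card) + k = Fintype.card V := by
      rw [← hsum, Finset.sum_add_distrib, Finset.sum_const, Finset.card_univ,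
        Fintype.card_fin, smul_eq_mul, mul_one]
    rw [Set.ncard_univ, Nat.card_eq_fintype_card]
    omega
  · rw [cross_filter_eq ends p Q T hT1,
      Finset.card_image_of_injective _ Subtype.val_injective]
    omega
  · intro i
    rw [within_filter_eq ends p Q T hT1 i]
    exact hT i

lemma decomposition (S : Finset E) :
    unionOf ends p (Qof ends p S) (fun i => S.filter (fun e => ∀ v ∈ ends e, p v = i)) = S := by
  ext e
  rw [unionOf, Finset.mem_union, Finset.mem_biUnion]
  constructor
  · rintro (he | ⟨i, _, he⟩)
    · rw [Finset.mem_image] at he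
      obtain ⟨⟨e', hcr⟩, he', rfl⟩ := he
      simpa [Qof] using he'
    · exact (Finset.mem_filter.mp he).1
  · intro he
    by_cases hcr : (Sym2.map p (ends e)).IsDiag
    · obtain ⟨a, b, hab⟩ := sym2_rep (ends e)
      have hpd : p a = p b := by
        rw [hab, Sym2.map_pair_eq, Sym2.mk_isDiag_iff] at hcr
        exact hcr
      refine Or.inr ⟨p a, Finset.mem_univ _, Finset.mem_filter.mpr ⟨he, ?_⟩⟩
      intro v hv
      rw [hab, Sym2.mem_iff] at hv
      rcases hv with rfl | rfl
      · rfl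
      · exact hpd.symm
    · refine Or.inl ?_
      rw [Finset.mem_image]
      exact ⟨⟨e, hcr⟩, by simp [Qof, he], rfl⟩

lemma Qof_unionOf (Q : Finset (CrossE ends p)) (T : Fin k → Finset E)
    (hT1 : ∀ i, ∀ e ∈ T i, ∀ v ∈ ends e, p v = i) :
    Qof ends p (unionOf ends p Q T) = Q := by
  ext ⟨e, hcr⟩
  simp only [Qof, Finset.mem_filter, Finset.mem_univ, true_and]
  rw [unionOf, Finset.mem_union, Finset.mem_biUnion]
  constructor
  · rintro (he | ⟨i, _, he⟩)
    · rw [Finset.mem_image] at he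
      obtain ⟨⟨e', hcr'⟩, he', rfl⟩ := he
      exact he'
    · exact absurd (within_diag ends p (hT1 i e he)) hcr
  · intro he
    exact Or.inl (Finset.mem_image.mpr ⟨⟨e, hcr⟩, he, rfl⟩)

end Aux

/-- Completely cuttable spanning trees of a connected multigraph `G` inducing the
connected partition `P` (given by `p : V → Fin k`) are in bijection with tuples of
a spanning tree of the quotient multigraph `G/P` and a spanning tree of each
induced subgraph `G[D i]`; consequently their number is
`ST(G/P) * ∏ i, ST(G[D i])`. -/
theorem count_completelyCuttable_inducing_partition {V E : Type*} [Fintype V] [Fintype E]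
    (ends : E → Sym2 V)
    (hloop : ∀ e, ¬ (ends e).IsDiag)
    (hconn : (mgFrom ends Set.univ).Connected)
    (k : ℕ) (hk : 1 ≤ k) (p : V → Fin k)
    (hne : ∀ i, ∃ v, p v = i)
    (hpartconn : ∀ i : Fin k, ((mgFrom ends Set.univ).induce {v | p v = i}).Connected) :
    Nonempty
      ({S : Finset E //
          IsSpanningTreeOn ends S Set.univ ∧
          (S.filter (fun e => ¬ (Sym2.map p (ends e)).IsDiag)).card = k - 1 ∧
          ∀ i : Fin k, IsSpanningTreeOn ends
            (S.filter (fun e => ∀ v ∈ ends e, p v = i)) {v | p v = i}} ≃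
        {Q : Finset {e : E // ¬ (Sym2.map p (ends e)).IsDiag} //
            IsSpanningTreeOn
              (fun e : {e : E // ¬ (Sym2.map p (ends e)).IsDiag} => Sym2.map p (ends e.1))
              Q (Set.univ : Set (Fin k))} ×
          ∀ i : Fin k, {S : Finset E // IsSpanningTreeOn ends S {v | p v = i}}) ∧
    ((Finset.univ : Finset (Finset E)).filter (fun S =>
        IsSpanningTreeOn ends S Set.univ ∧
        (S.filter (fun e => ¬ (Sym2.map p (ends e)).IsDiag)).card = k - 1 ∧
        ∀ i : Fin k, IsSpanningTreeOn ends
          (S.filter (fun e => ∀ v ∈ ends e, p v = i)) {v | p v = i})).card =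
      stCountOn
          (fun e : {e : E // ¬ (Sym2.map p (ends e)).IsDiag} => Sym2.map p (ends e.1))
          (Set.univ : Set (Fin k)) *
        ∏ i : Fin k, stCountOn ends {v | p v = i} := by
  have hq : (fun e : {e : E // ¬ (Sym2.map p (ends e)).IsDiag} => Sym2.map p (ends e.1))
      = qends ends p := rfl
  have eqv :
      {S : Finset E //
          IsSpanningTreeOn ends S Set.univ ∧
          (S.filter (fun e => ¬ (Sym2.map p (ends e)).IsDiag)).card = k - 1 ∧
          ∀ i : Fin k, IsSpanningTreeOn ends
            (S.filter (fun e => ∀ v ∈ ends e, p v = i)) {v | p v = i}} ≃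
        {Q : Finset {e : E // ¬ (Sym2.map p (ends e)).IsDiag} //
            IsSpanningTreeOn
              (fun e : {e : E // ¬ (Sym2.map p (ends e)).IsDiag} => Sym2.map p (ends e.1))
              Q (Set.univ : Set (Fin k))} ×
          ∀ i : Fin k, {S : Finset E // IsSpanningTreeOn ends S {v | p v = i}} := by
    refine
      { toFun := fun S =>
          (⟨Qof ends p S.1, hq ▸ forward_quot ends p hne hk S.1 S.2.1 S.2.2.1⟩,
            fun i => ⟨S.1.filter (fun e => ∀ v ∈ ends e, p v = i), S.2.2.2 i⟩),
        invFun := fun QT =>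
          ⟨unionOf ends p QT.1.1 (fun i => (QT.2 i).1),
            backward_pred ends p hloop hne hk QT.1.1 (hq ▸ QT.1.2)
              (fun i => (QT.2 i).1) (fun i => (QT.2 i).2)⟩,
        left_inv := ?_, right_inv := ?_ }
    · intro S
      exact Subtype.ext (decomposition ends p S.1)
    · intro QT
      have hT1 : ∀ i, ∀ e ∈ (QT.2 i).1, ∀ v ∈ ends e, p v = i := fun i => (QT.2 i).2.1
      refine Prod.ext ?_ ?_
      · exact Subtype.ext (Qof_unionOf ends p QT.1.1 _ hT1)
      · funext i
        exact Subtype.ext (within_filter_eq ends p QT.1.1 _ hT1 i)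
  refine ⟨⟨eqv⟩, ?_⟩
  have hcardA := Fintype.card_congr eqv
  rw [Fintype.card_prod, Fintype.card_pi] at hcardA
  simp only [Fintype.card_subtype] at hcardA
  simp only [stCountOn]
  convert hcardA using 2
end

section
/- Let G be a finite connected graph with positive vertex populations and k ≥ 1 with I = pop(G)/k an integer. Let T be a spanning tree of G. For each edge e of T, let w(e) be the population of one fixed side of the cut T − e. Then T is completely cuttable (partitionable by edge removals into k components each of population exactly I) if and only if the set {w(e) mod I : e ∈ E(T)} contains 0 with multiplicity exactly k−1, i.e., exactly k−1 edges e satisfy I ∣ w(e), where the side used to compute w(e) is the component of T − e not containing a fixed root r. -/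
open scoped Classical
set_option linter.unusedSectionVars false
namespace CutProof
open SimpleGraph
variable {V : Type*} [Fintype V]
def sside (T : SimpleGraph V) (r : V) (e : Sym2 V) : Set V :=
  {v | ¬ (T.deleteEdges {e}).Reachable v r}
variable {T : SimpleGraph V} {r : V}
lemma not_mem_sside_self (e : Sym2 V) : r ∉ sside T r e := fun h => h (Reachable.refl r)
lemma deleteEdges_le_single {s : Set (Sym2 V)} {e : Sym2 V} (he : e ∈ s) :
    T.deleteEdges s ≤ T.deleteEdges {e} := by
  intro a b hab
  simp only [deleteEdges_adj] at hab ⊢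
  exact ⟨hab.1, fun h => hab.2 (by rw [Set.mem_singleton_iff] at h; exact h ▸ he)⟩
lemma reachable_agree {s : Set (Sym2 V)} {e : Sym2 V} (he : e ∈ s) {u v : V}
    (h : (T.deleteEdges s).Reachable u v) :
    u ∈ sside T r e ↔ v ∈ sside T r e := by
  have h' : (T.deleteEdges {e}).Reachable u v := h.mono (deleteEdges_le_single he)
  simp only [sside, Set.mem_setOf_eq]
  exact ⟨fun hu hv => hu (h'.trans hv), fun hv hu => hv (h'.symm.trans hu)⟩
lemma reachable_of_mem_support {H : SimpleGraph V} {u v w : V} (p : H.Walk u v)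
    (hw : w ∈ p.support) : H.Reachable u w := ⟨p.takeUntil w hw⟩

lemma endpoint_cases (hT : T.IsTree) {x y : V} (hxy : T.Adj x y) :
    x ∈ sside T r s(x,y) ↔ y ∉ sside T r s(x,y) := by
  have hbr : ¬ (T.deleteEdges {s(x,y)}).Reachable x y := by
    have hb := (isAcyclic_iff_forall_edge_isBridge.mp hT.2) (T.mem_edgeSet.mpr hxy)
    exact isBridge_iff.mp hb
  have hnotboth : ¬ (x ∈ sside T r s(x,y) ∧ y ∈ sside T r s(x,y)) := by
    rintro ⟨hx, hy⟩
    obtain ⟨w⟩ := hT.1.preconnected x r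
    obtain ⟨q, hq⟩ : ∃ q : T.Walk x r, q.IsPath := ⟨w.toPath.1, w.toPath.2⟩
    have he : s(x,y) ∈ q.edges := by
      by_contra hne
      exact hx ⟨q.toDeleteEdge _ hne⟩
    cases q with
    | nil => simp at he
    | cons h' q' =>
      rw [Walk.edges_cons, List.mem_cons] at he
      rcases he with he | he
      · rw [Sym2.eq_iff] at he
        rcases he with ⟨-, hyu⟩ | ⟨hxu, hyx⟩
        · subst hyu
          have hnq : s(x,y) ∉ q'.edges := by
            have := hq.isTrail
            rw [Walk.isTrail_cons] at this
            exact this.2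
          exact hy ⟨q'.toDeleteEdge _ hnq⟩
        · exact hxy.ne' hyx
      · have hxs : x ∈ q'.support := q'.fst_mem_support_of_mem_edges he
        rw [Walk.cons_isPath_iff] at hq
        exact hq.2 hxs
  constructor
  · intro hx hy; exact hnotboth ⟨hx, hy⟩
  · intro hy
    by_contra hx
    simp only [sside, Set.mem_setOf_eq, not_not] at hx hy
    exact hbr (hx.trans hy.symm)

lemma isTrail_edge (hT : T.IsTree) {u v : V} (p : T.Walk u v) (hp : p.IsTrail) {e : Sym2 V}
    (he : e ∈ p.edges) : (u ∈ sside T r e ↔ v ∉ sside T r e) := by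
  induction p with
  | nil => simp at he
  | cons h q ih =>
    rw [Walk.edges_cons, List.mem_cons] at he
    have htq : q.IsTrail := ((Walk.isTrail_cons _ _).mp hp).1
    rcases he with he | he
    · subst he
      have h1 := endpoint_cases (r := r) hT h
      have hnq := ((Walk.isTrail_cons _ _).mp hp).2
      have h2 := reachable_agree (r := r) (Set.mem_singleton _)
        (⟨q.toDeleteEdge _ hnq⟩ : (T.deleteEdges _).Reachable _ _)
      tauto
    · have h2 := ih htq he
      have hne : s(_, _) ≠ e := fun hh => ((Walk.isTrail_cons _ _).mp hp).2 (hh ▸ he)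
      have h1 := reachable_agree (r := r) (Set.mem_singleton e)
        (⟨(Walk.cons h Walk.nil).toDeleteEdges {e} (by simp [hne])⟩ :
          (T.deleteEdges {e}).Reachable _ _)
      tauto

lemma walk_mem_edge {u v : V} (p : T.Walk u v) {e : Sym2 V}
    (hu : u ∈ sside T r e) (hv : v ∉ sside T r e) : e ∈ p.edges := by
  by_contra hne
  have h := reachable_agree (r := r) (Set.mem_singleton e)
    (⟨p.toDeleteEdge _ hne⟩ : (T.deleteEdges {e}).Reachable u v)
  exact hv (h.mp hu)

lemma reachable_deleteEdges_iff (hT : T.IsTree) {F : Set (Sym2 V)} {u v : V} :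
    (T.deleteEdges F).Reachable u v ↔ ∀ e ∈ F, (u ∈ sside T r e ↔ v ∈ sside T r e) := by
  constructor
  · exact fun h e he => reachable_agree he h
  · intro hag
    obtain ⟨w⟩ := hT.1.preconnected u v
    obtain ⟨q, hq⟩ : ∃ q : T.Walk u v, q.IsPath := ⟨w.toPath.1, w.toPath.2⟩
    have hqe : ∀ e ∈ q.edges, e ∉ F := by
      intro e heq heF
      have h1 := isTrail_edge (r := r) hT q hq.isTrail heq
      have h2 := hag e heF
      tauto
    exact ⟨q.toDeleteEdges F hqe⟩

lemma cross_unique {x y : V} (hxy : T.Adj x y) {e : Sym2 V}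
    (hx : x ∈ sside T r e) (hy : y ∉ sside T r e) : s(x,y) = e := by
  have h := walk_mem_edge (Walk.cons hxy Walk.nil) hx hy
  simp only [Walk.edges_cons, Walk.edges_nil, List.mem_singleton] at h
  exact h.symm

lemma exists_far (hT : T.IsTree) {e : Sym2 V} (he : e ∈ T.edgeSet) :
    ∃ p : V × V, e = s(p.1, p.2) ∧ p.1 ∈ sside T r e ∧ p.2 ∉ sside T r e := by
  induction e using Sym2.ind with
  | _ x y =>
    have hxy : T.Adj x y := (T.mem_edgeSet).mp he
    by_cases hx : x ∈ sside T r s(x,y)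
    · exact ⟨(x,y), rfl, hx, (endpoint_cases hT hxy).mp hx⟩
    · have hy : y ∈ sside T r s(x,y) := by
        by_contra hy; exact hx ((endpoint_cases hT hxy).mpr hy)
      exact ⟨(y,x), Sym2.eq_swap, hy, hx⟩

noncomputable def far (T : SimpleGraph V) (r : V) (e : Sym2 V) : V × V :=
  if h : ∃ p : V × V, e = s(p.1, p.2) ∧ p.1 ∈ sside T r e ∧ p.2 ∉ sside T r e then h.choose
  else (r, r)

lemma far_spec (hT : T.IsTree) {e : Sym2 V} (he : e ∈ T.edgeSet) :
    e = s((far T r e).1, (far T r e).2) ∧ (far T r e).1 ∈ sside T r e ∧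
      (far T r e).2 ∉ sside T r e := by
  rw [far, dif_pos (exists_far hT he)]
  exact (exists_far hT he).choose_spec

lemma sside_nested (hT : T.IsTree) {e e' : Sym2 V} (he : e ∈ T.edgeSet)
    (he' : e' ∈ T.edgeSet) (hne : e' ≠ e) (hfar : (far T r e').1 ∈ sside T r e) :
    sside T r e' ⊆ sside T r e := by
  obtain ⟨heq', hx', hy'⟩ := far_spec hT he'
  have hadj' : T.Adj (far T r e').1 (far T r e').2 := T.mem_edgeSet.mp (heq' ▸ he')
  have hy'in : (far T r e').2 ∈ sside T r e := by
    by_contra hy'o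
    exact hne (heq'.trans (cross_unique hadj' hfar hy'o))
  intro u hu
  by_contra hue
  simp only [sside, Set.mem_setOf_eq, not_not] at hue
  obtain ⟨w⟩ := hue
  have hsub : ∀ f ∈ w.edges, f ∈ T.edgeSet := fun f hf =>
    edgeSet_mono (T.deleteEdges_le {e}) (w.edges_subset_edgeSet hf)
  have he'm : e' ∈ (w.transfer T hsub).edges :=
    walk_mem_edge (w.transfer T hsub) hu (not_mem_sside_self e')
  have hxs : (far T r e').1 ∈ w.support := by
    have h := (w.transfer T hsub).fst_mem_support_of_mem_edges (heq' ▸ he'm)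
    rwa [Walk.support_transfer] at h
  exact hfar (((reachable_of_mem_support w hxs).symm).trans ⟨w⟩)

lemma sside_ne (hT : T.IsTree) {e e' : Sym2 V} (he : e ∈ T.edgeSet)
    (he' : e' ∈ T.edgeSet) (hne : e' ≠ e) : sside T r e' ≠ sside T r e := by
  intro hEq
  obtain ⟨heq, hx, hy⟩ := far_spec hT he
  have hadj : T.Adj (far T r e).1 (far T r e).2 := T.mem_edgeSet.mp (heq ▸ he)
  have hx' : (far T r e).1 ∈ sside T r e' := by rw [hEq]; exact hx
  have hy' : (far T r e).2 ∉ sside T r e' := by rw [hEq]; exact hy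
  exact hne (heq.trans (cross_unique hadj hx' hy')).symm


section Pop
variable (pop : V → ℕ)

noncomputable example (H : SimpleGraph V) : Fintype (H.ConnectedComponent) := inferInstance

lemma popSet_pos (hpos : ∀ v, 0 < pop v) {s : Set V} (hs : s.Nonempty) : 0 < popSet pop s := by
  obtain ⟨v, hv⟩ := hs
  unfold popSet
  calc 0 < pop v := hpos v
    _ = (if v ∈ s then pop v else 0) := by rw [if_pos hv]
    _ ≤ _ := Finset.single_le_sum (f := fun v => if v ∈ s then pop v else 0)
      (fun i _ => Nat.zero_le _) (Finset.mem_univ v)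

lemma popSet_lt (hpos : ∀ v, 0 < pop v) {s t : Set V} (hst : s ⊆ t) {v : V}
    (hv : v ∈ t) (hvs : v ∉ s) : popSet pop s < popSet pop t := by
  apply Finset.sum_lt_sum
  · intro i _
    by_cases hi : i ∈ s
    · rw [if_pos hi, if_pos (hst hi)]
    · rw [if_neg hi]; exact Nat.zero_le _
  · exact ⟨v, Finset.mem_univ v, by rw [if_neg hvs, if_pos hv]; exact hpos v⟩

lemma popSet_comp_partition (H : SimpleGraph V) [DecidableRel H.Adj] (s : Set V) :
    popSet pop s = ∑ c : H.ConnectedComponent, popSet pop (c.supp ∩ s) := by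
  unfold popSet
  rw [Finset.sum_comm]
  refine Finset.sum_congr rfl fun v _ => ?_
  by_cases hv : v ∈ s
  · simp only [Set.mem_inter_iff, SimpleGraph.ConnectedComponent.mem_supp_iff, hv, and_true,
      if_pos hv]
    rw [Finset.sum_ite_eq Finset.univ (H.connectedComponentMk v) (fun _ => pop v),
      if_pos (Finset.mem_univ _)]
    simp
  · simp [hv]

end Pop


section Comp
variable {F : Finset (Sym2 V)}

lemma mem_comp_reachable {H : SimpleGraph V} {c : H.ConnectedComponent} {u v : V}
    (hu : u ∈ c.supp) (hv : v ∈ c.supp) : H.Reachable u v := by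
  rw [SimpleGraph.ConnectedComponent.mem_supp_iff] at hu hv
  exact SimpleGraph.ConnectedComponent.eq.mp (hu.trans hv.symm)

lemma comp_subset_sside {e : Sym2 V} (he : e ∈ F)
    (c : (T.deleteEdges (F : Set (Sym2 V))).ConnectedComponent) {v : V} (hv : v ∈ c.supp)
    (hvs : v ∈ sside T r e) : c.supp ⊆ sside T r e := fun u hu =>
  (reachable_agree (r := r) (Finset.mem_coe.mpr he) (mem_comp_reachable hu hv)).mpr hvs

lemma label_exists (hT : T.IsTree) (hF : ↑F ⊆ T.edgeSet) (v : V) :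
    (T.deleteEdges (↑F : Set (Sym2 V))).Reachable v r ∨
      ∃ e ∈ F, v ∈ sside T r e ∧
        (T.deleteEdges (↑F : Set (Sym2 V))).Reachable v (far T r e).1 := by
  obtain ⟨w⟩ := hT.1.preconnected v r
  obtain ⟨q, hq⟩ : ∃ q : T.Walk v r, q.IsTrail := ⟨w.toPath.1, w.toPath.2.isTrail⟩
  clear w
  induction q with
  | nil => exact Or.inl (Reachable.refl _)
  | @cons v u w h q ih =>
    have htq := (Walk.isTrail_cons _ _).mp hq
    by_cases hmem : s(v,u) ∈ F
    · by_cases hvs : v ∈ sside T w s(v,u)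
      · refine Or.inr ⟨s(v,u), hmem, hvs, ?_⟩
        obtain ⟨heq, hx, hy⟩ := far_spec (r := w) hT (hF hmem)
        have hfv : (far T w s(v,u)).1 = v ∨ (far T w s(v,u)).1 = u := by
          rw [Sym2.eq_iff] at heq
          rcases heq with ⟨h1, _⟩ | ⟨_, h2⟩
          · exact Or.inl h1.symm
          · exact Or.inr h2.symm
        rcases hfv with hfv | hfv
        · rw [hfv]
        · exfalso
          rw [hfv] at hx
          exact (endpoint_cases hT h).mp hvs hx
      · exfalso
        have hu : u ∈ sside T w s(v,u) := by
          by_contra hu; exact hvs ((endpoint_cases hT h).mpr hu)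
        exact htq.2 (walk_mem_edge q hu (not_mem_sside_self (T := T) (r := w) _))
    · have hadj : (T.deleteEdges (↑F : Set (Sym2 V))).Adj v u := by
        rw [deleteEdges_adj]; exact ⟨h, by exact_mod_cast hmem⟩
      rcases ih htq.1 with hl | ⟨e, heF, hue, hre⟩
      · exact Or.inl (hadj.reachable.trans hl)
      · exact Or.inr ⟨e, heF,
          (reachable_agree (Finset.mem_coe.mpr heF) hadj.reachable).mpr hue,
          hadj.reachable.trans hre⟩

/-- labeling bijection from `Option F` to connected components of `T - F` -/
noncomputable def lab (T : SimpleGraph V) (r : V) (F : Finset (Sym2 V)) :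
    Option {e : Sym2 V // e ∈ F} →
    (T.deleteEdges (↑F : Set (Sym2 V))).ConnectedComponent
  | none => (T.deleteEdges (↑F : Set (Sym2 V))).connectedComponentMk r
  | some e => (T.deleteEdges (↑F : Set (Sym2 V))).connectedComponentMk (far T r ↑e).1

lemma lab_bijective (hT : T.IsTree) (hF : ↑F ⊆ T.edgeSet) :
    Function.Bijective (lab T r F) := by
  constructor
  · rintro (_ | ⟨e, he⟩) (_ | ⟨e', he'⟩) h <;> simp only [lab] at h
    · rfl
    · exfalso
      have hre := SimpleGraph.ConnectedComponent.eq.mp h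
      have hx := (far_spec (r := r) hT (hF he')).2.1
      exact not_mem_sside_self (r := r) (T := T) ↑e'
        ((reachable_agree (Finset.mem_coe.mpr he') hre).mpr hx)
    · exfalso
      have hre := SimpleGraph.ConnectedComponent.eq.mp h
      have hx := (far_spec (r := r) hT (hF he)).2.1
      exact not_mem_sside_self (r := r) (T := T) ↑e
        ((reachable_agree (Finset.mem_coe.mpr he) hre).mp hx)
    · by_cases hee : (e : Sym2 V) = e'
      · exact Option.some_inj.mpr (Subtype.ext hee)
      exfalso
      have hre := SimpleGraph.ConnectedComponent.eq.mp h
      have hxe := (far_spec (r := r) hT (hF he)).2.1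
      have hxe' := (far_spec (r := r) hT (hF he')).2.1
      have h1 : (far T r ↑e').1 ∈ sside T r ↑e :=
        (reachable_agree (Finset.mem_coe.mpr he) hre).mp hxe
      have h2 : (far T r ↑e).1 ∈ sside T r ↑e' :=
        (reachable_agree (Finset.mem_coe.mpr he') hre).mpr hxe'
      have hs1 : sside T r ↑e' ⊆ sside T r ↑e :=
        sside_nested hT (hF he) (hF he') (fun hh => hee hh.symm) (by exact h1)
      have hs2 : sside T r ↑e ⊆ sside T r ↑e' :=
        sside_nested hT (hF he') (hF he) hee h2
      exact sside_ne hT (hF he) (hF he') (fun hh => hee hh.symm) (hs1.antisymm hs2)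
  · intro c
    induction c using SimpleGraph.ConnectedComponent.ind with
    | _ v =>
      rcases label_exists hT hF v with hl | ⟨e, heF, _, hre⟩
      · exact ⟨none, (SimpleGraph.ConnectedComponent.eq.mpr hl).symm⟩
      · exact ⟨some ⟨e, heF⟩, (SimpleGraph.ConnectedComponent.eq.mpr hre.symm)⟩

lemma card_comp (r : V) (hT : T.IsTree) (hF : ↑F ⊆ T.edgeSet) :
    Fintype.card ((T.deleteEdges (↑F : Set (Sym2 V))).ConnectedComponent) = F.card + 1 := by
  rw [← Fintype.card_of_bijective (lab_bijective (r := r) hT hF), Fintype.card_option,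
    Fintype.card_coe, Nat.add_comm]

lemma sum_comps (hT : T.IsTree) (hF : ↑F ⊆ T.edgeSet)
    (f : (T.deleteEdges (↑F : Set (Sym2 V))).ConnectedComponent → ℕ) :
    ∑ c, f c = f ((T.deleteEdges (↑F : Set (Sym2 V))).connectedComponentMk r) +
      ∑ e ∈ F, f ((T.deleteEdges (↑F : Set (Sym2 V))).connectedComponentMk (far T r e).1) := by
  rw [← Function.Bijective.sum_comp (lab_bijective (r := r) hT hF) f, Fintype.sum_option]
  congr 1
  rw [← Finset.sum_coe_sort F
    (fun e => f ((T.deleteEdges (↑F : Set (Sym2 V))).connectedComponentMk (far T r e).1))]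
  rfl

end Comp


lemma popSet_empty (pop : V → ℕ) : popSet pop (∅ : Set V) = 0 := by
  unfold popSet; simp

lemma mem_supp_self {H : SimpleGraph V} (v : V) : v ∈ (H.connectedComponentMk v).supp :=
  (SimpleGraph.ConnectedComponent.mem_supp_iff _ _).mpr rfl

lemma sside_decomp (pop : V → ℕ) (hT : T.IsTree) {F : Finset (Sym2 V)}
    (hF : ↑F ⊆ T.edgeSet) {e : Sym2 V} (he : e ∈ F) :
    popSet pop (sside T r e) = ∑ e' ∈ F,
      if (far T r e').1 ∈ sside T r e then
        popSet pop
          (((T.deleteEdges (↑F : Set (Sym2 V))).connectedComponentMk (far T r e').1).supp)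
      else 0 := by
  rw [popSet_comp_partition pop (T.deleteEdges (↑F : Set (Sym2 V))) (sside T r e),
    sum_comps hT hF]
  have h0 : ((T.deleteEdges (↑F : Set (Sym2 V))).connectedComponentMk r).supp ∩ sside T r e
      = ∅ := by
    ext v
    simp only [Set.mem_inter_iff, Set.mem_empty_iff_false, iff_false, not_and]
    intro hv hvs
    exact not_mem_sside_self (T := T) (r := r) e
      (comp_subset_sside he _ hv hvs (mem_supp_self r))
  rw [h0, popSet_empty, zero_add]
  refine Finset.sum_congr rfl fun e' he' => ?_
  by_cases hfar : (far T r e').1 ∈ sside T r e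
  · rw [if_pos hfar, Set.inter_eq_left.mpr (comp_subset_sside he _ (mem_supp_self _) hfar)]
  · rw [if_neg hfar]
    have hempty : ((T.deleteEdges (↑F : Set (Sym2 V))).connectedComponentMk
        (far T r e').1).supp ∩ sside T r e = ∅ := by
      ext v
      simp only [Set.mem_inter_iff, Set.mem_empty_iff_false, iff_false, not_and]
      intro hv hvs
      exact hfar (comp_subset_sside he _ hv hvs (mem_supp_self _))
    rw [hempty, popSet_empty]

lemma comp_dich (hT : T.IsTree) {F : Finset (Sym2 V)} {e : Sym2 V} (heT : e ∈ T.edgeSet)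
    {c : (T.deleteEdges (↑F : Set (Sym2 V))).ConnectedComponent}
    (hc : c ≠ (T.deleteEdges (↑F : Set (Sym2 V))).connectedComponentMk (far T r e).1)
    {u u' : V} (hu : u ∈ c.supp) (hu' : u' ∈ c.supp) :
    (u ∈ sside T r e ↔ u' ∈ sside T r e) := by
  by_contra hdiff
  obtain ⟨w⟩ := mem_comp_reachable hu hu'
  have hsub : ∀ f ∈ w.edges, f ∈ T.edgeSet := fun f hf =>
    edgeSet_mono (T.deleteEdges_le _) (w.edges_subset_edgeSet hf)
  have hew : e ∈ (w.transfer T hsub).edges := by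
    by_cases hus : u ∈ sside T r e
    · exact walk_mem_edge _ hus (fun h => hdiff ⟨fun _ => h, fun _ => hus⟩)
    · have hu's : u' ∈ sside T r e := by tauto
      have hrev := walk_mem_edge ((w.transfer T hsub).reverse) hu's hus
      rwa [Walk.edges_reverse, List.mem_reverse] at hrev
  obtain ⟨heq, -, -⟩ := far_spec (r := r) hT heT
  have hxs : (far T r e).1 ∈ (w.transfer T hsub).support :=
    (w.transfer T hsub).fst_mem_support_of_mem_edges (heq ▸ hew)
  rw [Walk.support_transfer] at hxs
  have hmk : (T.deleteEdges (↑F : Set (Sym2 V))).connectedComponentMk (far T r e).1 = c := by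
    rw [← (SimpleGraph.ConnectedComponent.mem_supp_iff _ _).mp hu]
    exact (SimpleGraph.ConnectedComponent.eq.mpr (reachable_of_mem_support w hxs)).symm
  exact hc hmk.symm


end CutProof

open CutProof SimpleGraph

/-- Fix a root `r` of a spanning tree `T` of a connected graph `G`. For an edge `e` of
`T`, let `w(e)` be the population of the component of `T - e` not containing `r`. Then
`T` is completely cuttable (partitionable by removing `k-1` edges into `k` components
each of population exactly `I`) iff exactly `k-1` edges `e` of `T` satisfy `I ∣ w(e)`. -/
theorem completelyCuttable_iff_rooted_weights {V : Type*} [Fintype V]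
    (G T : SimpleGraph V) (pop : V → ℕ)
    (hpos : ∀ v, 0 < pop v) (hG : G.Connected) (hT : T ≤ G) (hTree : T.IsTree)
    (k I : ℕ) (hk : 1 ≤ k) (hIpos : 0 < I) (hI : popSet pop Set.univ = k * I)
    (r : V) :
    (∃ F : Finset (Sym2 V), ↑F ⊆ T.edgeSet ∧ F.card = k - 1 ∧
        ∀ c : (T.deleteEdges ↑F).ConnectedComponent, popSet pop c.supp = I) ↔
      ((Finset.univ : Finset (Sym2 V)).filter (fun e => e ∈ T.edgeSet ∧
          I ∣ popSet pop {v | ¬ (T.deleteEdges {e}).Reachable v r})).card = k - 1 := by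
  constructor
  · rintro ⟨F, hFsub, hFcard, hcomp⟩
    have hsetEq : (Finset.univ : Finset (Sym2 V)).filter (fun e => e ∈ T.edgeSet ∧
        I ∣ popSet pop {v | ¬ (T.deleteEdges {e}).Reachable v r}) = F := by
      ext e
      simp only [Finset.mem_filter, Finset.mem_univ, true_and]
      constructor
      · rintro ⟨heT, hdvd0⟩
        have hdvd : I ∣ popSet pop (sside T r e) := hdvd0
        by_contra heF
        obtain ⟨heq, hx, hy⟩ := far_spec (r := r) hTree heT
        have hadj : T.Adj (far T r e).1 (far T r e).2 := T.mem_edgeSet.mp (heq ▸ heT)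
        have hadj' : (T.deleteEdges (↑F : Set (Sym2 V))).Adj (far T r e).1 (far T r e).2 := by
          rw [SimpleGraph.deleteEdges_adj]
          exact ⟨hadj, fun hmem => heF (Finset.mem_coe.mp (by rwa [← heq] at hmem))⟩
        have hdec := popSet_comp_partition pop (T.deleteEdges (↑F : Set (Sym2 V)))
          (sside T r e)
        rw [← Finset.add_sum_erase _ _ (Finset.mem_univ
          ((T.deleteEdges (↑F : Set (Sym2 V))).connectedComponentMk (far T r e).1))] at hdec
        have hrest : I ∣ ∑ c ∈ Finset.univ.erase
            ((T.deleteEdges (↑F : Set (Sym2 V))).connectedComponentMk (far T r e).1),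
            popSet pop (c.supp ∩ sside T r e) := by
          refine Finset.dvd_sum fun c hc => ?_
          have hcne := (Finset.mem_erase.mp hc).1
          by_cases hex : (c.supp ∩ sside T r e).Nonempty
          · obtain ⟨v, hv1, hv2⟩ := hex
            have hsubc : c.supp ∩ sside T r e = c.supp := Set.inter_eq_left.mpr
              (fun u hu => (comp_dich hTree heT hcne hu hv1).mpr hv2)
            rw [hsubc, hcomp c]
          · rw [Set.not_nonempty_iff_eq_empty.mp hex, popSet_empty]
            exact dvd_zero I
        have hCS : I ∣ popSet pop
            (((T.deleteEdges (↑F : Set (Sym2 V))).connectedComponentMk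
              (far T r e).1).supp ∩ sside T r e) := by
          rw [hdec] at hdvd
          have h2 := Nat.dvd_sub hdvd hrest
          rwa [Nat.add_sub_cancel] at h2
        have hpos1 : 0 < popSet pop
            (((T.deleteEdges (↑F : Set (Sym2 V))).connectedComponentMk
              (far T r e).1).supp ∩ sside T r e) :=
          popSet_pos pop hpos ⟨(far T r e).1, mem_supp_self _, hx⟩
        have hyC : (far T r e).2 ∈ ((T.deleteEdges (↑F : Set (Sym2 V))).connectedComponentMk
            (far T r e).1).supp := by
          rw [SimpleGraph.ConnectedComponent.mem_supp_iff]
          exact SimpleGraph.ConnectedComponent.sound hadj'.symm.reachable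
        have hlt : popSet pop
            (((T.deleteEdges (↑F : Set (Sym2 V))).connectedComponentMk
              (far T r e).1).supp ∩ sside T r e) < I := by
          have hlt2 := popSet_lt pop hpos (Set.inter_subset_left
            (s := ((T.deleteEdges (↑F : Set (Sym2 V))).connectedComponentMk
              (far T r e).1).supp) (t := sside T r e)) hyC (fun hmem => hy hmem.2)
          rwa [hcomp] at hlt2
        have := Nat.eq_zero_of_dvd_of_lt hCS hlt
        omega
      · intro heF
        refine ⟨hFsub heF, ?_⟩
        show I ∣ popSet pop (sside T r e)
        rw [popSet_comp_partition pop (T.deleteEdges (↑F : Set (Sym2 V))) (sside T r e)]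
        refine Finset.dvd_sum fun c _ => ?_
        by_cases hex : (c.supp ∩ sside T r e).Nonempty
        · obtain ⟨v, hv1, hv2⟩ := hex
          rw [Set.inter_eq_left.mpr (comp_subset_sside heF c hv1 hv2), hcomp c]
        · rw [Set.not_nonempty_iff_eq_empty.mp hex, popSet_empty]
          exact dvd_zero I
    rw [hsetEq]; exact hFcard
  · intro hcard
    set F₀ : Finset (Sym2 V) := (Finset.univ : Finset (Sym2 V)).filter (fun e =>
      e ∈ T.edgeSet ∧ I ∣ popSet pop {v | ¬ (T.deleteEdges {e}).Reachable v r}) with hF₀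
    have hmem : ∀ e : Sym2 V, e ∈ F₀ →
        (e ∈ T.edgeSet ∧ I ∣ popSet pop (sside T r e)) := by
      intro e he
      rw [hF₀, Finset.mem_filter] at he
      exact he.2
    have hFsub : ↑F₀ ⊆ T.edgeSet := fun e he => (hmem e (Finset.mem_coe.mp he)).1
    refine ⟨F₀, hFsub, hcard, ?_⟩
    have key : ∀ n : ℕ, ∀ e ∈ F₀, popSet pop (sside T r e) < n →
        I ∣ popSet pop (((T.deleteEdges (↑F₀ : Set (Sym2 V))).connectedComponentMk
          (far T r e).1).supp) := by
      intro n
      induction n with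
      | zero => intro e he h0; omega
      | succ n ih =>
        intro e he hlt
        have hdec := sside_decomp (r := r) pop hTree hFsub he
        rw [← Finset.add_sum_erase _ _ he,
          if_pos (far_spec (r := r) hTree (hFsub (Finset.mem_coe.mpr he))).2.1] at hdec
        have hrest : I ∣ ∑ e' ∈ F₀.erase e,
            (if (far T r e').1 ∈ sside T r e then
              popSet pop (((T.deleteEdges (↑F₀ : Set (Sym2 V))).connectedComponentMk
                (far T r e').1).supp)
            else 0) := by
          refine Finset.dvd_sum fun e' he' => ?_
          obtain ⟨hne, he'F⟩ := Finset.mem_erase.mp he'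
          by_cases hf : (far T r e').1 ∈ sside T r e
          · rw [if_pos hf]
            apply ih e' he'F
            have hsub : sside T r e' ⊆ sside T r e :=
              sside_nested hTree (hFsub (Finset.mem_coe.mpr he))
                (hFsub (Finset.mem_coe.mpr he'F)) hne hf
            have hne' : sside T r e' ≠ sside T r e :=
              sside_ne hTree (hFsub (Finset.mem_coe.mpr he))
                (hFsub (Finset.mem_coe.mpr he'F)) hne
            obtain ⟨v, hv1, hv2⟩ : ∃ v, v ∈ sside T r e ∧ v ∉ sside T r e' := by
              by_contra hno
              push_neg at hno
              exact hne' (Set.Subset.antisymm hsub hno)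
            have hltv := popSet_lt pop hpos hsub hv1 hv2
            omega
          · rw [if_neg hf]; exact dvd_zero I
        have hSdvd : I ∣ popSet pop (sside T r e) := (hmem e he).2
        rw [hdec] at hSdvd
        have h2 := Nat.dvd_sub hSdvd hrest
        rwa [Nat.add_sub_cancel] at h2
    have hdvd_c : ∀ e ∈ F₀, I ∣ popSet pop
        (((T.deleteEdges (↑F₀ : Set (Sym2 V))).connectedComponentMk (far T r e).1).supp) :=
      fun e he => key (popSet pop (sside T r e) + 1) e he (Nat.lt_succ_self _)
    have htot : popSet pop Set.univ =
        popSet pop (((T.deleteEdges (↑F₀ : Set (Sym2 V))).connectedComponentMk r).supp) +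
        ∑ e ∈ F₀, popSet pop
          (((T.deleteEdges (↑F₀ : Set (Sym2 V))).connectedComponentMk (far T r e).1).supp) := by
      rw [popSet_comp_partition pop (T.deleteEdges (↑F₀ : Set (Sym2 V))) Set.univ]
      simp only [Set.inter_univ]
      exact sum_comps hTree hFsub _
    have hdvd_r : I ∣ popSet pop
        (((T.deleteEdges (↑F₀ : Set (Sym2 V))).connectedComponentMk r).supp) := by
      have h1 : I ∣ ∑ e ∈ F₀, popSet pop
          (((T.deleteEdges (↑F₀ : Set (Sym2 V))).connectedComponentMk (far T r e).1).supp) :=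
        Finset.dvd_sum fun e he => hdvd_c e he
      have h2 : I ∣ popSet pop (Set.univ : Set V) := hI ▸ ⟨k, by ring⟩
      rw [htot, add_comm] at h2
      have h3 := Nat.dvd_sub h2 h1
      rwa [Nat.add_sub_cancel_left] at h3
    have hdvd_all : ∀ c : (T.deleteEdges (↑F₀ : Set (Sym2 V))).ConnectedComponent,
        I ∣ popSet pop c.supp := by
      intro c
      induction c using SimpleGraph.ConnectedComponent.ind with
      | _ v =>
        rcases label_exists hTree hFsub v with hl | ⟨e, heF, -, hre⟩
        · rw [SimpleGraph.ConnectedComponent.sound hl]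
          exact hdvd_r
        · rw [SimpleGraph.ConnectedComponent.sound hre]
          exact hdvd_c e heF
    have hpos_all : ∀ c : (T.deleteEdges (↑F₀ : Set (Sym2 V))).ConnectedComponent,
        0 < popSet pop c.supp := by
      intro c
      induction c using SimpleGraph.ConnectedComponent.ind with
      | _ v => exact popSet_pos pop hpos ⟨v, mem_supp_self v⟩
    have hge : ∀ c : (T.deleteEdges (↑F₀ : Set (Sym2 V))).ConnectedComponent,
        I ≤ popSet pop c.supp := fun c => Nat.le_of_dvd (hpos_all c) (hdvd_all c)
    have hcardc : Fintype.card ((T.deleteEdges (↑F₀ : Set (Sym2 V))).ConnectedComponent) = k := by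
      rw [card_comp r hTree hFsub, hcard]
      omega
    have hsum : ∑ c : (T.deleteEdges (↑F₀ : Set (Sym2 V))).ConnectedComponent,
        popSet pop c.supp = k * I := by
      rw [← hI, popSet_comp_partition pop (T.deleteEdges (↑F₀ : Set (Sym2 V))) Set.univ]
      simp only [Set.inter_univ]
    intro c
    by_contra hnec
    have hltc : I < popSet pop c.supp := lt_of_le_of_ne (hge c) (Ne.symm hnec)
    have hSlt : ∑ _c : (T.deleteEdges (↑F₀ : Set (Sym2 V))).ConnectedComponent, I <
        ∑ c : (T.deleteEdges (↑F₀ : Set (Sym2 V))).ConnectedComponent, popSet pop c.supp :=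
      Finset.sum_lt_sum (fun i _ => hge i) ⟨c, Finset.mem_univ c, hltc⟩
    rw [Finset.sum_const, Finset.card_univ, hcardc, smul_eq_mul, hsum] at hSlt
    omega
end

section
/- Let T be a finite tree with positive vertex populations summing to k·I (I an integer ≥ 1, k ≥ 1). Then the valid cut edges of T are exactly the edges contained in every partition of T into population-I components obtained by edge-deletion, whenever such a partition exists: i.e., if T admits a set F of k−1 edges whose removal leaves k components of population exactly I, then F equals the set of all valid cut edges of T, and this F is unique. -/
open scoped Classical

section Aux

variable {V : Type*} [Fintype V]

lemma popSet_pos (pop : V → ℕ) (hpos : ∀ v, 0 < pop v) {s : Set V} {v : V} (hv : v ∈ s) :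
    0 < popSet pop s := by
  have h1 : (if v ∈ s then pop v else 0) ≤ popSet pop s := by
    apply Finset.single_le_sum (f := fun w => if w ∈ s then pop w else 0)
    · intro i _; positivity
    · exact Finset.mem_univ v
  simp only [if_pos hv] at h1
  exact lt_of_lt_of_le (hpos v) h1

lemma popSet_union_disjoint (pop : V → ℕ) {s t : Set V} (h : Disjoint s t) :
    popSet pop (s ∪ t) = popSet pop s + popSet pop t := by
  rw [popSet, popSet, popSet, ← Finset.sum_add_distrib]
  refine Finset.sum_congr rfl fun v _ => ?_
  by_cases hs : v ∈ s
  · have ht : v ∉ t := fun ht => Set.disjoint_left.mp h hs ht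
    simp [hs, ht]
  · by_cases ht : v ∈ t <;> simp [hs, ht]

/-- The population of a component is the sum of populations of vertices in it,
in filtered form. -/
lemma popSet_supp_eq (pop : V → ℕ) (G : SimpleGraph V) (d : G.ConnectedComponent) :
    popSet pop d.supp =
      ∑ v ∈ Finset.univ.filter (fun v => G.connectedComponentMk v = d), pop v := by
  classical
  rw [popSet, Finset.sum_filter]
  refine Finset.sum_congr rfl fun v _ => ?_
  simp only [SimpleGraph.ConnectedComponent.mem_supp_iff]

/-- Population of a component of the larger graph is the sum of the populations of the
components of the smaller graph mapping to it. -/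
lemma popSet_supp_fiber {G H : SimpleGraph V} (hle : G ≤ H) (pop : V → ℕ)
    (c : H.ConnectedComponent) :
    popSet pop c.supp =
      ∑ d ∈ Finset.univ.filter
          (fun d : G.ConnectedComponent =>
            d.map (SimpleGraph.Hom.ofLE hle) = c),
        popSet pop d.supp := by
  classical
  have key := Finset.sum_fiberwise_eq_sum_filter Finset.univ
      (Finset.univ.filter (fun d : G.ConnectedComponent =>
        d.map (SimpleGraph.Hom.ofLE hle) = c))
      (fun v => G.connectedComponentMk v) pop
  have lhs : popSet pop c.supp =
      ∑ v ∈ Finset.univ.filter (fun v => G.connectedComponentMk v ∈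
        Finset.univ.filter (fun d : G.ConnectedComponent =>
          d.map (SimpleGraph.Hom.ofLE hle) = c)), pop v := by
    rw [popSet, Finset.sum_filter]
    refine Finset.sum_congr rfl fun v _ => ?_
    simp only [SimpleGraph.ConnectedComponent.mem_supp_iff, Finset.mem_filter,
      Finset.mem_univ, true_and, SimpleGraph.ConnectedComponent.map_mk,
      SimpleGraph.Hom.ofLE_apply]
  rw [lhs, ← key]
  exact Finset.sum_congr rfl fun d _ => (popSet_supp_eq pop G d).symm

/-- Splitting a walk at the deleted edge `s(a,b)`. -/
lemma reach_split {G : SimpleGraph V} {a b : V} : ∀ {v w : V}, G.Walk v w →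
    (G.deleteEdges {s(a, b)}).Reachable v w ∨
      (G.deleteEdges {s(a, b)}).Reachable v a ∨ (G.deleteEdges {s(a, b)}).Reachable v b := by
  intro v w p
  induction p with
  | nil => exact Or.inl (SimpleGraph.Reachable.refl _)
  | @cons u u' _ h q ih =>
    by_cases hvw : s(u, u') = s(a, b)
    · rw [Sym2.eq_iff] at hvw
      rcases hvw with ⟨rfl, rfl⟩ | ⟨rfl, rfl⟩
      · exact Or.inr (Or.inl (SimpleGraph.Reachable.refl _))
      · exact Or.inr (Or.inr (SimpleGraph.Reachable.refl _))
    · have hadj : (G.deleteEdges {s(a, b)}).Adj u u' := by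
        simp only [SimpleGraph.deleteEdges_adj, Set.mem_singleton_iff]
        exact ⟨h, hvw⟩
      rcases ih with hr | hr | hr
      · exact Or.inl (hadj.reachable.trans hr)
      · exact Or.inr (Or.inl (hadj.reachable.trans hr))
      · exact Or.inr (Or.inr (hadj.reachable.trans hr))

/-- The main characterization: membership in a perfect cut set is equivalent to being a
valid cut edge.  Note that this does not use the cardinality hypothesis. -/
lemma mem_iff_validCut (T : SimpleGraph V) (hTree : T.IsTree)
    (pop : V → ℕ) (hpos : ∀ v, 0 < pop v) (I : ℕ) (hIpos : 1 ≤ I)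
    (F : Finset (Sym2 V)) (hF : ↑F ⊆ T.edgeSet)
    (hcomp : ∀ c : (T.deleteEdges ↑F).ConnectedComponent, popSet pop c.supp = I) :
    ∀ e : Sym2 V, e ∈ F ↔ ValidCut T pop I e := by
  classical
  intro e
  induction e using Sym2.ind with
  | _ a b =>
  constructor
  · -- forward direction: edges of F are valid cuts
    intro he
    have heT : s(a, b) ∈ T.edgeSet := hF he
    refine ⟨heT, fun c => ?_⟩
    have hle : T.deleteEdges ↑F ≤ T.deleteEdges {s(a, b)} := by
      apply SimpleGraph.deleteEdges_anti
      intro x hx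
      rw [Set.mem_singleton_iff] at hx
      subst hx
      exact he
    rw [popSet_supp_fiber hle pop c]
    set fib := Finset.univ.filter
      (fun d : (T.deleteEdges ↑F).ConnectedComponent =>
        d.map (SimpleGraph.Hom.ofLE hle) = c) with hfib
    have hsum : ∑ d ∈ fib, popSet pop d.supp = fib.card * I := by
      rw [Finset.sum_congr rfl (fun d _ => hcomp d), Finset.sum_const, smul_eq_mul]
    refine ⟨fib.card, ?_, by convert hsum⟩
    -- fiber is nonempty
    obtain ⟨v, hv⟩ := c.exists_rep
    have hvmem : (T.deleteEdges ↑F).connectedComponentMk v ∈ fib := by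
      rw [hfib, Finset.mem_filter]
      refine ⟨Finset.mem_univ _, ?_⟩
      rw [SimpleGraph.ConnectedComponent.map_mk]
      exact hv
    have := Finset.card_pos.mpr ⟨_, hvmem⟩
    omega
  · -- backward direction: valid cuts belong to F
    intro hvc
    by_contra he
    have heT : s(a, b) ∈ T.edgeSet := hvc.1
    have hab : T.Adj a b := heT
    set G : SimpleGraph V := T.deleteEdges ↑F with hGdef
    set G' : SimpleGraph V := G.deleteEdges {s(a, b)} with hG'def
    set H : SimpleGraph V := T.deleteEdges {s(a, b)} with hHdef
    -- the deleted edge is a bridge of T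
    have hbr : ¬ H.Reachable a b := by
      have hac : T.IsAcyclic := hTree.2
      have hb := (SimpleGraph.isAcyclic_iff_forall_adj_isBridge.mp hac) hab
      rw [SimpleGraph.isBridge_iff] at hb
      exact hb
    have hG'H : G' ≤ H := by
      intro v w hvw
      rw [hG'def, hGdef] at hvw
      rw [hHdef]
      simp only [SimpleGraph.deleteEdges_adj] at hvw ⊢
      exact ⟨hvw.1.1, hvw.2⟩
    have hG'G : G' ≤ G := by
      rw [hG'def]; exact SimpleGraph.deleteEdges_le _
    have hGab : G.Adj a b := by
      rw [hGdef]
      simp only [SimpleGraph.deleteEdges_adj]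
      exact ⟨hab, he⟩
    -- splitting of the G-component of a
    have hsplit : ∀ v : V, G.connectedComponentMk v = G.connectedComponentMk a →
        G'.Reachable v a ∨ G'.Reachable v b := by
      intro v hv
      have hr : G.Reachable v a := SimpleGraph.ConnectedComponent.eq.mp hv
      obtain ⟨p⟩ := hr
      rcases reach_split (a := a) (b := b) p with h | h | h
      · exact Or.inl (by rw [hG'def] at *; exact h)
      · exact Or.inl (by rw [hG'def] at *; exact h)
      · exact Or.inr (by rw [hG'def] at *; exact h)
    set Ca := G'.connectedComponentMk a with hCa
    set Cb := G'.connectedComponentMk b with hCb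
    have hCab : Ca ≠ Cb := by
      intro hEq
      rw [hCa, hCb] at hEq
      exact hbr ((SimpleGraph.ConnectedComponent.eq.mp hEq).mono hG'H)
    have hsuppEq : (G.connectedComponentMk a).supp = Ca.supp ∪ Cb.supp := by
      apply Set.eq_of_subset_of_subset
      · intro v hv
        rw [SimpleGraph.ConnectedComponent.mem_supp_iff] at hv
        rcases hsplit v hv with hr | hr
        · exact Or.inl (by
            rw [SimpleGraph.ConnectedComponent.mem_supp_iff, hCa]
            exact SimpleGraph.ConnectedComponent.sound hr)
        · exact Or.inr (by
            rw [SimpleGraph.ConnectedComponent.mem_supp_iff, hCb]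
            exact SimpleGraph.ConnectedComponent.sound hr)
      · intro v hv
        rw [SimpleGraph.ConnectedComponent.mem_supp_iff]
        rcases hv with hv | hv
        · rw [SimpleGraph.ConnectedComponent.mem_supp_iff, hCa] at hv
          exact SimpleGraph.ConnectedComponent.sound
            ((SimpleGraph.ConnectedComponent.eq.mp hv).mono hG'G)
        · rw [SimpleGraph.ConnectedComponent.mem_supp_iff, hCb] at hv
          exact SimpleGraph.ConnectedComponent.sound
            (((SimpleGraph.ConnectedComponent.eq.mp hv).mono hG'G).trans
              hGab.symm.reachable)
    have hdisj : Disjoint Ca.supp Cb.supp := by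
      rw [Set.disjoint_left]
      intro v hva hvb
      rw [SimpleGraph.ConnectedComponent.mem_supp_iff] at hva hvb
      exact hCab (by rw [← hva, ← hvb])
    have hsumCaCb : popSet pop Ca.supp + popSet pop Cb.supp = I := by
      rw [← popSet_union_disjoint pop hdisj, ← hsuppEq, hcomp]
    have hCaPos : 0 < popSet pop Ca.supp :=
      popSet_pos pop hpos (by rw [SimpleGraph.ConnectedComponent.mem_supp_iff, hCa])
    have hCbPos : 0 < popSet pop Cb.supp :=
      popSet_pos pop hpos (by rw [SimpleGraph.ConnectedComponent.mem_supp_iff, hCb])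
    have hCaLt : popSet pop Ca.supp < I := by omega
    -- classification of the components of G'
    have hclass : ∀ d : G'.ConnectedComponent,
        d = Ca ∨ d = Cb ∨ popSet pop d.supp = I := by
      refine SimpleGraph.ConnectedComponent.ind fun v => ?_
      by_cases hd : G.connectedComponentMk v = G.connectedComponentMk a
      · rcases hsplit v hd with hr | hr
        · exact Or.inl (by rw [hCa]; exact SimpleGraph.ConnectedComponent.sound hr)
        · exact Or.inr (Or.inl
            (by rw [hCb]; exact SimpleGraph.ConnectedComponent.sound hr))
      · refine Or.inr (Or.inr ?_)
        have hsupp : (G'.connectedComponentMk v).supp =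
            (G.connectedComponentMk v).supp := by
          apply Set.eq_of_subset_of_subset
          · intro w hw
            rw [SimpleGraph.ConnectedComponent.mem_supp_iff] at hw ⊢
            exact SimpleGraph.ConnectedComponent.sound
              ((SimpleGraph.ConnectedComponent.eq.mp hw).mono hG'G)
          · intro w hw
            rw [SimpleGraph.ConnectedComponent.mem_supp_iff] at hw ⊢
            have hwv : G.Reachable w v := SimpleGraph.ConnectedComponent.eq.mp hw
            obtain ⟨p⟩ := hwv
            have hnoe : ∀ e' ∈ p.edges, e' ∉ ({s(a, b)} : Set (Sym2 V)) := by
              intro e' he' hmem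
              rw [Set.mem_singleton_iff] at hmem
              subst hmem
              have haSupp : a ∈ p.support :=
                SimpleGraph.Walk.fst_mem_support_of_mem_edges p he'
              have hra : G.Reachable w a := ⟨p.takeUntil a haSupp⟩
              have hwv' : G.Reachable w v := SimpleGraph.ConnectedComponent.eq.mp hw
              exact hd (SimpleGraph.ConnectedComponent.sound (hwv'.symm.trans hra))
            refine SimpleGraph.ConnectedComponent.sound ?_
            rw [hG'def]
            exact ⟨p.toDeleteEdges _ hnoe⟩
        rw [hsupp]
        exact hcomp _
    -- the H-component of a has population ≡ popSet Ca mod I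
    obtain ⟨m, hm1, hm2⟩ := hvc.2 (H.connectedComponentMk a)
    rw [popSet_supp_fiber hG'H pop] at hm2
    set fib := Finset.univ.filter
      (fun d : G'.ConnectedComponent =>
        d.map (SimpleGraph.Hom.ofLE hG'H) = H.connectedComponentMk a)
      with hfib
    have hCaFib : Ca ∈ fib := by
      rw [hfib, Finset.mem_filter]
      refine ⟨Finset.mem_univ _, ?_⟩
      rw [hCa, SimpleGraph.ConnectedComponent.map_mk]
      rfl
    have hCbFib : Cb ∉ fib := by
      rw [hfib, Finset.mem_filter]
      rintro ⟨-, hEq⟩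
      rw [hCb, SimpleGraph.ConnectedComponent.map_mk] at hEq
      exact hbr (SimpleGraph.ConnectedComponent.eq.mp hEq).symm
    have hsplitSum : ∑ d ∈ fib, popSet pop d.supp =
        popSet pop Ca.supp + ∑ d ∈ fib.erase Ca, popSet pop d.supp := by
      rw [← Finset.add_sum_erase _ _ hCaFib]
    have hrest : ∑ d ∈ fib.erase Ca, popSet pop d.supp = (fib.erase Ca).card * I := by
      rw [Finset.sum_congr rfl, Finset.sum_const, smul_eq_mul]
      intro d hdmem
      have hdne : d ≠ Ca := Finset.ne_of_mem_erase hdmem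
      have hdmem' : d ∈ fib := Finset.mem_of_mem_erase hdmem
      rcases hclass d with h | h | h
      · exact absurd h hdne
      · subst h; exact absurd hdmem' hCbFib
      · exact h
    set t := (fib.erase Ca).card with ht
    replace hm2 : ∑ d ∈ fib, popSet pop d.supp = m * I := by convert hm2
    rw [hsplitSum, hrest] at hm2
    -- now popSet Ca + t * I = m * I with 0 < popSet Ca < I: contradiction
    have h1 : t * I < m * I := by omega
    have h2 : m * I < (t + 1) * I := by
      have hexp : (t + 1) * I = I + t * I := by ring
      omega
    have ht1 : t < m := lt_of_mul_lt_mul_right h1 (Nat.zero_le I)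
    have ht2 : m < t + 1 := lt_of_mul_lt_mul_right h2 (Nat.zero_le I)
    omega

end Aux

/-- If a tree `T` with total population `k·I` admits a set `F` of `k-1` edges whose
removal leaves `k` components of population exactly `I`, then `F` is exactly the set of
all valid cut edges of `T`, and `F` is the unique such set. -/
theorem cut_set_unique {V : Type*} [Fintype V]
    (T : SimpleGraph V) (hTree : T.IsTree)
    (pop : V → ℕ) (hpos : ∀ v, 0 < pop v)
    (k I : ℕ) (hk : 1 ≤ k) (hIpos : 1 ≤ I) (hI : popSet pop Set.univ = k * I)
    (F : Finset (Sym2 V)) (hF : ↑F ⊆ T.edgeSet) (hcard : F.card = k - 1)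
    (hcomp : ∀ c : (T.deleteEdges ↑F).ConnectedComponent, popSet pop c.supp = I) :
    (∀ e : Sym2 V, e ∈ F ↔ ValidCut T pop I e) ∧
    ∀ F' : Finset (Sym2 V), ↑F' ⊆ T.edgeSet → F'.card = k - 1 →
      (∀ c : (T.deleteEdges ↑F').ConnectedComponent, popSet pop c.supp = I) →
      F' = F := by
  have hmain := mem_iff_validCut T hTree pop hpos I hIpos F hF hcomp
  refine ⟨hmain, fun F' hF' _ hcomp' => ?_⟩
  have hmain' := mem_iff_validCut T hTree pop hpos I hIpos F' hF' hcomp'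
  ext e
  rw [hmain e, hmain' e]
end
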